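/- arXiv:1710.10339 — 6 statements merged into one kernel-verified Lean document; each statement's English description precedes it below -/
import Mathlib

section
/- Under the G(n, p_n) Erdős–Rényi measure with p_n = Ω(n^{-c}) for some 0 ≤ c < 1/2, for every ε, δ > 0 there exists N such that for all n ≥ N, with probability at least 1 - ε, every subset S of the vertex set with |S| = ⌊n/2⌋ satisfies c(S) ≥ (1-δ)·n²·p_n/4. -/
set_option maxHeartbeats 1000000


open MeasureTheory ProbabilityTheory Filter
open scoped ENNReal NNReal

/-- Index type for potential edges: 2-element subsets of the vertex set. -/
abbrev EdgeIdx (n : ℕ) := {e : Finset (Fin n) // e.card = 2}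

/-- The Erdős–Rényi measure `G(n,p)`: each potential edge is present
independently with probability `p`. -/
noncomputable def erMeasure (n : ℕ) (p : ℝ≥0∞) (hp : p ≤ 1) :
    Measure (EdgeIdx n → Bool) :=
  Measure.pi fun _ => (PMF.bernoulli p.toNNReal
    (by simpa using ENNReal.toNNReal_mono ENNReal.one_ne_top hp)).toMeasure

/-- The cut size `c(S)`: number of present edges with one endpoint in `S`
and the other outside `S`. -/
noncomputable def cut (n : ℕ) (S : Finset (Fin n)) (G : EdgeIdx n → Bool) : ℕ :=
  letI := Classical.decEq (Fin n)
  (Finset.univ.filter fun e : EdgeIdx n =>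
    G e = true ∧ (∃ u ∈ e.1, u ∈ S) ∧ (∃ v ∈ e.1, v ∉ S)).card

/-- `L(i, φ, G)`: vertices placed at the (1-indexed) positions `1, …, i`
by the layout `φ` (positions in `Fin n` are 0-indexed). -/
def Lset (n : ℕ) (φ : Fin n ≃ Fin n) (i : ℕ) : Finset (Fin n) :=
  Finset.univ.filter fun u => (φ u : ℕ) < i

/-- `θ(i, φ, G)`: number of present edges crossing position `i`. -/
noncomputable def theta (n : ℕ) (G : EdgeIdx n → Bool) (φ : Fin n ≃ Fin n) (i : ℕ) : ℕ :=
  cut n (Lset n φ i) G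

/-- Cutwidth of a layout: `max_{1 ≤ i ≤ n} θ(i, φ, G)`. -/
noncomputable def CW (n : ℕ) (G : EdgeIdx n → Bool) (φ : Fin n ≃ Fin n) : ℕ :=
  (Finset.Icc 1 n).sup (theta n G φ)

/-- `u` and `v` are adjacent in `G`. -/
def adj (n : ℕ) (G : EdgeIdx n → Bool) (u v : Fin n) : Prop :=
  u ≠ v ∧ ∃ e : EdgeIdx n, G e = true ∧ e.1 = {u, v}

/-- `δ(i, φ, G)`: number of vertices at positions `≤ i` with a neighbour at a
position `> i`. -/
noncomputable def vsep (n : ℕ) (G : EdgeIdx n → Bool) (φ : Fin n ≃ Fin n) (i : ℕ) : ℕ :=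
  letI := Classical.dec
  (Finset.univ.filter fun u =>
    (φ u : ℕ) < i ∧ ∃ v, i ≤ (φ v : ℕ) ∧ adj n G u v).card

/-- Vertex separation of a layout: `max_{1 ≤ i ≤ n} δ(i, φ, G)`. -/
noncomputable def VS (n : ℕ) (G : EdgeIdx n → Bool) (φ : Fin n ≃ Fin n) : ℕ :=
  (Finset.Icc 1 n).sup (vsep n G φ)

namespace ERaux

open Finset

/-- Weight of a single coordinate of a graph configuration. -/
noncomputable def w (q : ℝ) : Bool → ℝ := fun b => bif b then q else 1 - q

lemma w_nonneg {q : ℝ} (hq0 : 0 ≤ q) (hq1 : q ≤ 1) (b : Bool) : 0 ≤ w q b := by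
  cases b <;> simp [w] <;> linarith

open scoped Classical in
/-- The set of potential edges crossing between `S` and its complement. -/
noncomputable def crossSet (n : ℕ) (S : Finset (Fin n)) : Finset (EdgeIdx n) :=
  Finset.univ.filter fun e : EdgeIdx n => (∃ u ∈ e.1, u ∈ S) ∧ (∃ v ∈ e.1, v ∉ S)

open scoped Classical in
lemma cut_eq (n : ℕ) (S : Finset (Fin n)) (G : EdgeIdx n → Bool) :
    cut n S G = (Finset.univ.filter fun e : EdgeIdx n =>
      e ∈ crossSet n S ∧ G e = true).card := by
  unfold cut crossSet
  congr 1
  ext e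
  simp only [mem_filter, mem_univ, true_and]
  tauto

open scoped Classical in
lemma singleton_meas (n : ℕ) (p : ℝ≥0∞) (hp : p ≤ 1) (G₀ : EdgeIdx n → Bool) :
    erMeasure n p hp {G₀} = ENNReal.ofReal (∏ e, w p.toReal (G₀ e)) := by
  have hpt : p ≠ ⊤ := (hp.trans_lt ENNReal.one_lt_top).ne
  have hp' : p.toNNReal ≤ 1 := by simpa using ENNReal.toNNReal_mono ENNReal.one_ne_top hp
  have hb : ∀ b : Bool, (PMF.bernoulli p.toNNReal hp').toMeasure {b} = ENNReal.ofReal (w p.toReal b) := by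
    intro b
    rw [PMF.toMeasure_apply_singleton _ _ (MeasurableSet.of_discrete), PMF.bernoulli_apply]
    cases b
    · show ((1 - p.toNNReal : ℝ≥0) : ℝ≥0∞) = _
      rw [ENNReal.coe_sub, ENNReal.coe_one, ENNReal.coe_toNNReal hpt]
      simp only [w, Bool.cond_false]
      rw [ENNReal.ofReal_sub _ ENNReal.toReal_nonneg, ENNReal.ofReal_one,
        ENNReal.ofReal_toReal hpt]
    · show ((p.toNNReal : ℝ≥0) : ℝ≥0∞) = _
      rw [ENNReal.coe_toNNReal hpt]
      simp [w, ENNReal.ofReal_toReal hpt]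
  have hset : ({G₀} : Set (EdgeIdx n → Bool)) = Set.pi Set.univ (fun e => {G₀ e}) := by
    simp [Set.univ_pi_singleton]
  rw [erMeasure, hset, Measure.pi_pi]
  have hq1 : p.toReal ≤ 1 := by simpa using ENNReal.toReal_mono (by simp) hp
  calc ∏ e : EdgeIdx n, (PMF.bernoulli p.toNNReal hp').toMeasure {G₀ e}
      = ∏ e : EdgeIdx n, ENNReal.ofReal (w p.toReal (G₀ e)) :=
        Finset.prod_congr rfl fun e _ => hb (G₀ e)
    _ = _ := (ENNReal.ofReal_prod_of_nonneg (fun e _ =>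
        w_nonneg ENNReal.toReal_nonneg hq1 (G₀ e))).symm

open scoped Classical in
lemma meas_eq_sum (n : ℕ) (p : ℝ≥0∞) (hp : p ≤ 1) (A : Set (EdgeIdx n → Bool)) :
    erMeasure n p hp A =
      ENNReal.ofReal (∑ G ∈ Finset.univ.filter (· ∈ A), ∏ e, w p.toReal (G e)) := by
  have hq1 : p.toReal ≤ 1 := by
    simpa using ENNReal.toReal_mono (by simp) hp
  have hA : A = ⋃ G ∈ Finset.univ.filter (· ∈ A), ({G} : Set (EdgeIdx n → Bool)) := by
    ext G; simp
  conv_lhs => rw [hA]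
  rw [measure_biUnion_finset ?_ (fun _ _ => MeasurableSet.of_discrete)]
  · calc ∑ G ∈ Finset.univ.filter (· ∈ A), erMeasure n p hp {G}
        = ∑ G ∈ Finset.univ.filter (· ∈ A), ENNReal.ofReal (∏ e, w p.toReal (G e)) :=
          Finset.sum_congr rfl fun G _ => singleton_meas n p hp G
      _ = _ := (ENNReal.ofReal_sum_of_nonneg (fun G _ => Finset.prod_nonneg fun e _ =>
          w_nonneg ENNReal.toReal_nonneg hq1 (G e))).symm
  · intro x _ y _ hxy
    simp [Set.disjoint_singleton, hxy]

open scoped Classical in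
lemma chernoff (n : ℕ) (q t a : ℝ) (hq0 : 0 ≤ q) (hq1 : q ≤ 1) (ht : 0 < t)
    (S : Finset (Fin n)) :
    ∑ G ∈ Finset.univ.filter (fun G : EdgeIdx n → Bool => (cut n S G : ℝ) < a),
        ∏ e, w q (G e)
      ≤ Real.exp (t * a) * Real.exp (-(q * (t / (1 + t)))) ^ (crossSet n S).card := by
  set C := crossSet n S with hC
  set g : EdgeIdx n → Bool → ℝ :=
    fun e b => w q b * (if e ∈ C ∧ b = true then Real.exp (-t) else 1) with hg
  have hwnn : ∀ (G : EdgeIdx n → Bool), 0 ≤ ∏ e, w q (G e) :=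
    fun G => Finset.prod_nonneg fun e _ => w_nonneg hq0 hq1 (G e)
  have key1 : ∀ G : EdgeIdx n → Bool,
      (∏ e, w q (G e)) * Real.exp (-t * (cut n S G)) = ∏ e, g e (G e) := by
    intro G
    rw [hg]
    simp only
    rw [Finset.prod_mul_distrib]
    congr 1
    rw [← Finset.prod_filter_mul_prod_filter_not Finset.univ
      (fun e => e ∈ C ∧ G e = true)]
    rw [Finset.prod_congr rfl (fun e he => if_pos (Finset.mem_filter.mp he).2),
      Finset.prod_congr rfl (fun e he => if_neg (Finset.mem_filter.mp he).2),
      Finset.prod_const, Finset.prod_const, one_pow, mul_one,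
      ← cut_eq n S G]
    rw [show -t * (cut n S G : ℝ) = (cut n S G : ℕ) * (-t) by ring,
      Real.exp_nat_mul]
  have h1t : (0:ℝ) < 1 + t := by linarith
  have hbase0 : 0 ≤ q * Real.exp (-t) + (1 - q) := by
    have h0 := Real.exp_nonneg (-t)
    nlinarith
  have hbase : q * Real.exp (-t) + (1 - q) ≤ Real.exp (-(q * (t / (1 + t)))) := by
    have he : Real.exp (-t) ≤ 1 / (1 + t) := by
      rw [Real.exp_neg, one_div]
      exact inv_anti₀ (by positivity) (by linarith [Real.add_one_le_exp t])
    have h2 : q * Real.exp (-t) + (1 - q) ≤ 1 - q * (t / (1 + t)) := by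
      have h3 : q * Real.exp (-t) ≤ q * (1 / (1 + t)) := mul_le_mul_of_nonneg_left he hq0
      have h4 : q * (1 / (1 + t)) + (1 - q) = 1 - q * (t / (1 + t)) := by
        field_simp
        ring
      linarith
    calc q * Real.exp (-t) + (1 - q) ≤ 1 - q * (t / (1 + t)) := h2
      _ ≤ Real.exp (-(q * (t / (1 + t)))) := by
          linarith [Real.add_one_le_exp (-(q * (t / (1 + t))))]
  calc ∑ G ∈ Finset.univ.filter (fun G : EdgeIdx n → Bool => (cut n S G : ℝ) < a),
          ∏ e, w q (G e)
      ≤ ∑ G ∈ Finset.univ.filter (fun G : EdgeIdx n → Bool => (cut n S G : ℝ) < a),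
          (∏ e, w q (G e)) * Real.exp (t * (a - cut n S G)) := by
        refine Finset.sum_le_sum fun G hG => ?_
        have hc : (cut n S G : ℝ) < a := (Finset.mem_filter.mp hG).2
        exact le_mul_of_one_le_right (hwnn G)
          (Real.one_le_exp (by nlinarith))
    _ ≤ ∑ G : EdgeIdx n → Bool, (∏ e, w q (G e)) * Real.exp (t * (a - cut n S G)) := by
        refine Finset.sum_le_sum_of_subset_of_nonneg (Finset.filter_subset _ _)
          fun G _ _ => ?_
        have := hwnn G
        positivity
    _ = Real.exp (t * a) * ∑ G : EdgeIdx n → Bool, ∏ e, g e (G e) := by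
        rw [Finset.mul_sum]
        refine Finset.sum_congr rfl fun G _ => ?_
        rw [← key1 G, show t * (a - (cut n S G : ℝ)) = t * a + -t * (cut n S G : ℝ) by ring,
          Real.exp_add]
        ring
    _ = Real.exp (t * a) * ∏ e : EdgeIdx n, ∑ b, g e b := by
        rw [← Fintype.prod_sum g]
    _ = Real.exp (t * a) * ∏ e : EdgeIdx n,
          (if e ∈ C then q * Real.exp (-t) + (1 - q) else 1) := by
        congr 1
        refine Finset.prod_congr rfl fun e _ => ?_
        by_cases he : e ∈ C <;> simp [hg, w, he]
    _ = Real.exp (t * a) * (q * Real.exp (-t) + (1 - q)) ^ C.card := by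
        congr 1
        rw [← Finset.prod_filter_mul_prod_filter_not Finset.univ (· ∈ C)]
        rw [Finset.prod_congr rfl (fun e he => if_pos (Finset.mem_filter.mp he).2),
          Finset.prod_congr rfl (fun e he => if_neg (Finset.mem_filter.mp he).2),
          Finset.prod_const, Finset.prod_const, one_pow, mul_one]
        congr 1
        simp [Finset.filter_mem_eq_inter]
    _ ≤ Real.exp (t * a) * Real.exp (-(q * (t / (1 + t)))) ^ C.card :=
        mul_le_mul_of_nonneg_left
          (pow_le_pow_left₀ hbase0 hbase _) (Real.exp_nonneg _)

open scoped Classical in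
lemma crossSet_card (n : ℕ) (hn : 2 ≤ n) (S : Finset (Fin n)) :
    S.card * Sᶜ.card ≤ (crossSet n S).card := by
  set a0 : Fin n := ⟨0, by omega⟩ with ha0
  set a1 : Fin n := ⟨1, by omega⟩ with ha1
  have hne : a0 ≠ a1 := by
    intro h
    have := congrArg Fin.val h
    simp [ha0, ha1] at this
  set e₀ : EdgeIdx n := ⟨{a0, a1}, Finset.card_pair hne⟩ with he₀
  set f : Fin n × Fin n → EdgeIdx n := fun uv =>
    if h : uv.1 ≠ uv.2 then ⟨{uv.1, uv.2}, Finset.card_pair h⟩ else e₀ with hf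
  have := Finset.card_le_card_of_injOn f (s := S ×ˢ Sᶜ) (t := crossSet n S) ?_ ?_
  · simpa [Finset.card_product] using this
  · rintro ⟨u, v⟩ huv
    rw [Finset.mem_coe, Finset.mem_product] at huv
    obtain ⟨hu, hv⟩ := huv
    rw [Finset.mem_compl] at hv
    have hne' : u ≠ v := fun h => hv (h ▸ hu)
    simp only [hf, dif_pos hne']
    rw [crossSet, Finset.mem_coe, Finset.mem_filter]
    refine ⟨Finset.mem_univ _, ⟨u, by simp, hu⟩, ⟨v, by simp, hv⟩⟩
  · rintro ⟨u, v⟩ huv ⟨u', v'⟩ huv' heq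
    rw [Finset.coe_product] at huv huv'
    obtain ⟨hu, hv⟩ := huv
    obtain ⟨hu', hv'⟩ := huv'
    simp only [Finset.mem_coe, Finset.mem_compl] at hu hv hu' hv'
    have hne1 : u ≠ v := fun h => hv (h ▸ hu)
    have hne2 : u' ≠ v' := fun h => hv' (h ▸ hu')
    simp only [hf, dif_pos hne1, dif_pos hne2, Subtype.mk.injEq] at heq
    have hu'mem : u' ∈ ({u, v} : Finset (Fin n)) := by rw [heq]; simp
    have hv'mem : v' ∈ ({u, v} : Finset (Fin n)) := by rw [heq]; simp
    rw [Finset.mem_insert, Finset.mem_singleton] at hu'mem hv'mem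
    have h1 : u' = u := by rcases hu'mem with h | h; exact h; exact absurd (h ▸ hu') hv
    have h2 : v' = v := by rcases hv'mem with h | h; exact absurd (h.symm ▸ hu) hv'; exact h
    simp [Prod.ext_iff, h1, h2]

end ERaux

/-- High-probability lower bound on all balanced cuts: if `p_n = Ω(n^{-c})`
with `0 ≤ c < 1/2`, then w.h.p. every `S` with `|S| = ⌊n/2⌋` has
`c(S) ≥ (1 - δ) n² p_n / 4`. -/
theorem stmt_7 (c : ℝ) (hc0 : 0 ≤ c) (hc : c < 1 / 2)
    (p : ℕ → ℝ≥0∞) (hp1 : ∀ n, p n ≤ 1)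
    (hΩ : ∃ K : ℝ, 0 < K ∧ ∀ᶠ n : ℕ in atTop, K * (n : ℝ) ^ (-c) ≤ (p n).toReal) :
    ∀ ε : ℝ, 0 < ε → ∀ δ : ℝ, 0 < δ → ∃ N : ℕ, ∀ n ≥ N,
      ENNReal.ofReal (1 - ε) ≤
        erMeasure n (p n) (hp1 n)
          {G | ∀ S : Finset (Fin n), S.card = n / 2 →
            (1 - δ) * (n : ℝ) ^ 2 * (p n).toReal / 4 ≤ (cut n S G : ℝ)} := by
  classical
  obtain ⟨K, hK, hKev⟩ := hΩ
  intro ε hε δ hδ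
  set δ₁ : ℝ := min δ 1 with hδ₁def
  have hδ₁0 : 0 < δ₁ := by rw [hδ₁def]; exact lt_min hδ zero_lt_one
  have hδ₁1 : δ₁ ≤ 1 := by rw [hδ₁def]; exact min_le_right _ _
  have hδ₁δ : δ₁ ≤ δ := by rw [hδ₁def]; exact min_le_left _ _
  clear_value δ₁
  set t : ℝ := δ₁ / 2 with htdef
  have ht0 : 0 < t := by rw [htdef]; linarith
  have ht12 : t ≤ 1 / 2 := by rw [htdef]; linarith
  clear_value t
  have h1t : (0:ℝ) < 1 + t := by linarith
  set C₀ : ℝ := K * δ₁ ^ 2 / 24 with hC₀def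
  have hC₀ : 0 < C₀ := by
    rw [hC₀def]; exact div_pos (mul_pos hK (pow_pos hδ₁0 2)) (by norm_num)
  clear_value C₀
  set A : ℝ := Real.log 2 + 1 with hAdef
  set L : ℝ := Real.log ε with hLdef
  clear_value A L
  -- the eventual analytic bound
  have hevA : ∀ᶠ n : ℕ in atTop, A * n - C₀ * (n:ℝ) ^ ((2:ℝ) - c) ≤ L := by
    have hsqrt : Tendsto (fun n : ℕ => ((n:ℝ)) ^ ((1:ℝ)/2)) atTop atTop :=
      (tendsto_rpow_atTop (by norm_num)).comp tendsto_natCast_atTop_atTop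
    filter_upwards [hsqrt.eventually_ge_atTop ((A + |L| + 1) / C₀), eventually_ge_atTop 1]
      with n h1 h2
    have hx1 : (1:ℝ) ≤ (n:ℝ) := by exact_mod_cast h2
    have hx0 : (0:ℝ) < (n:ℝ) := by linarith
    have hpow : (n:ℝ) * (n:ℝ) ^ ((1:ℝ)/2) ≤ (n:ℝ) ^ ((2:ℝ) - c) := by
      have e1 : (n:ℝ) ^ ((2:ℝ) - c) = (n:ℝ) ^ (1:ℝ) * (n:ℝ) ^ ((1:ℝ) - c) := by
        rw [← Real.rpow_add hx0]; ring_nf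
      rw [e1, Real.rpow_one]
      have : (n:ℝ) ^ ((1:ℝ)/2) ≤ (n:ℝ) ^ ((1:ℝ) - c) :=
        Real.rpow_le_rpow_of_exponent_le hx1 (by linarith)
      nlinarith
    have h1' : A + |L| + 1 ≤ C₀ * (n:ℝ) ^ ((1:ℝ)/2) := by
      rw [div_le_iff₀ hC₀] at h1; linarith
    have hfac : A - C₀ * (n:ℝ) ^ ((1:ℝ)/2) ≤ -|L| - 1 := by linarith
    have hmid : A * n - C₀ * (n:ℝ) ^ ((2:ℝ) - c) ≤ (n:ℝ) * (A - C₀ * (n:ℝ) ^ ((1:ℝ)/2)) := by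
      nlinarith
    have h4 : ((n:ℝ) - 1) * (A - C₀ * (n:ℝ) ^ ((1:ℝ)/2)) ≤ 0 :=
      mul_nonpos_of_nonneg_of_nonpos (by linarith) (by nlinarith [abs_nonneg L])
    have h3 : (n:ℝ) * (A - C₀ * (n:ℝ) ^ ((1:ℝ)/2)) ≤ -|L| - 1 := by nlinarith
    have := neg_abs_le L
    linarith
  have hev := (hevA.and hKev).and (eventually_ge_atTop 2)
  rw [eventually_atTop] at hev
  obtain ⟨N, hN⟩ := hev
  refine ⟨N, fun n hn => ?_⟩
  obtain ⟨⟨hAn, hqK⟩, hn2⟩ := hN n hn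
  set q : ℝ := (p n).toReal with hqdef
  have hq0 : 0 ≤ q := by rw [hqdef]; exact ENNReal.toReal_nonneg
  have hq1 : q ≤ 1 := by
    rw [hqdef]; simpa using ENNReal.toReal_mono (by simp) (hp1 n)
  clear_value q
  set a : ℝ := (1 - δ₁) * (n:ℝ)^2 * q / 4 with hadef
  clear_value a
  set k : ℕ := n / 2 with hkdef
  set m : ℕ := n - n / 2 with hmdef
  have hk' : n ≤ 2 * k + 1 := by rw [hkdef]; omega
  have hm' : n ≤ 2 * m := by rw [hmdef]; omega
  clear_value k m
  set F : Finset (Finset (Fin n)) := Finset.univ.filter (fun S => S.card = n / 2) with hFdef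
  set bad : Set (EdgeIdx n → Bool) :=
    ⋃ S ∈ F, {G : EdgeIdx n → Bool | (cut n S G : ℝ) < a} with hbaddef
  set B : ℝ := Real.exp (t * a) * Real.exp (-(q * (t / (1 + t)))) ^ (k * m) with hBdef
  have hPM : IsProbabilityMeasure (erMeasure n (p n) (hp1 n)) := by
    unfold erMeasure; infer_instance
  -- per-set bound
  have hperS : ∀ S ∈ F, erMeasure n (p n) (hp1 n)
      {G : EdgeIdx n → Bool | (cut n S G : ℝ) < a} ≤ ENNReal.ofReal B := by
    intro S hSF
    have hS : S.card = n / 2 := by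
      have := (Finset.mem_filter.mp (hFdef ▸ hSF)).2
      exact this
    have hfe : Finset.univ.filter
          (· ∈ {G : EdgeIdx n → Bool | (cut n S G : ℝ) < a})
        = Finset.univ.filter (fun G : EdgeIdx n → Bool => (cut n S G : ℝ) < a) := by
      ext G; simp
    rw [ERaux.meas_eq_sum n (p n) (hp1 n) _, hfe, ← hqdef]
    refine (ENNReal.ofReal_le_ofReal
      ((ERaux.chernoff n q t a hq0 hq1 ht0 S).trans ?_))
    rw [hBdef]
    refine mul_le_mul_of_nonneg_left ?_ (Real.exp_nonneg _)
    have hcardC : k * m ≤ (ERaux.crossSet n S).card := by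
      have h := ERaux.crossSet_card n hn2 S
      rw [Finset.card_compl, Fintype.card_fin, hS] at h
      rw [hkdef, hmdef]
      exact h
    exact pow_le_pow_of_le_one (Real.exp_nonneg _)
      (Real.exp_le_one_iff.mpr (neg_nonpos.mpr
        (mul_nonneg hq0 (div_nonneg ht0.le h1t.le)))) hcardC
  -- union bound
  have hbad : erMeasure n (p n) (hp1 n) bad ≤ ENNReal.ofReal ((2:ℝ)^n * B) := by
    have h1 : erMeasure n (p n) (hp1 n) bad
        ≤ ∑ S ∈ F, erMeasure n (p n) (hp1 n)
            {G : EdgeIdx n → Bool | (cut n S G : ℝ) < a} := by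
      rw [hbaddef]
      exact measure_biUnion_finset_le _ _
    have h2 : ∑ S ∈ F, erMeasure n (p n) (hp1 n)
          {G : EdgeIdx n → Bool | (cut n S G : ℝ) < a}
        ≤ ∑ _S ∈ F, ENNReal.ofReal B := Finset.sum_le_sum hperS
    have hFcard : F.card ≤ 2 ^ n := by
      rw [hFdef]
      calc (Finset.univ.filter (fun S : Finset (Fin n) => S.card = n / 2)).card
          ≤ (Finset.univ : Finset (Finset (Fin n))).card := Finset.card_filter_le _ _
        _ = 2 ^ n := by rw [Finset.card_univ, Fintype.card_finset, Fintype.card_fin]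
    have h3 : ∑ _S ∈ F, ENNReal.ofReal B ≤ ENNReal.ofReal ((2:ℝ)^n * B) := by
      rw [Finset.sum_const, nsmul_eq_mul]
      have hc : ((F.card : ℕ) : ℝ≥0∞) ≤ ((2 ^ n : ℕ) : ℝ≥0∞) := Nat.cast_le.mpr hFcard
      have hcast : ((2 ^ n : ℕ) : ℝ≥0∞) = ENNReal.ofReal ((2:ℝ)^n) := by
        rw [ENNReal.ofReal_pow (by norm_num : (0:ℝ) ≤ 2)]
        norm_num
      calc (F.card : ℝ≥0∞) * ENNReal.ofReal B
          ≤ ((2 ^ n : ℕ) : ℝ≥0∞) * ENNReal.ofReal B := mul_le_mul_left hc _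
        _ = ENNReal.ofReal ((2:ℝ)^n) * ENNReal.ofReal B := by rw [hcast]
        _ = ENNReal.ofReal ((2:ℝ)^n * B) := (ENNReal.ofReal_mul (by positivity)).symm
    exact h1.trans (h2.trans h3)
  -- numeric bound on (2:ℝ)^n * B
  have hnum : (2:ℝ)^n * B ≤ ε := by
    have h2n : Real.exp ((n:ℝ) * Real.log 2) = (2:ℝ)^n := by
      rw [Real.exp_nat_mul, Real.exp_log (by norm_num : (0:ℝ) < 2)]
    have h3n : Real.exp (-(q * (t / (1 + t)))) ^ (k * m)
        = Real.exp (((k * m : ℕ) : ℝ) * (-(q * (t / (1 + t))))) :=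
      (Real.exp_nat_mul _ _).symm
    have hexp : (2:ℝ)^n * B
        = Real.exp ((n:ℝ) * Real.log 2 + t * a
            - ((k:ℝ) * (m:ℝ)) * (q * (t / (1 + t)))) := by
      rw [hBdef, ← h2n, h3n, ← Real.exp_add, ← Real.exp_add]
      congr 1
      push_cast
      ring
    rw [hexp]
    -- the exponent inequality
    have hexpbound : (n:ℝ) * Real.log 2 + t * a
        - ((k:ℝ) * (m:ℝ)) * (q * (t / (1 + t))) ≤ A * n - C₀ * (n:ℝ) ^ ((2:ℝ) - c) := by
      set v : ℝ := 1 / (1 + t) with hvdef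
      have hv0 : 0 < v := by rw [hvdef]; exact div_pos one_pos h1t
      have hv1 : v ≤ 1 := by rw [hvdef, div_le_one h1t]; linarith
      have hveq : v * (1 + t) = 1 := by rw [hvdef]; field_simp
      have hsv : t / (1 + t) = t * v := by rw [hvdef]; ring
      clear_value v
      have hX : (1 - δ₁) - v ≤ -(δ₁/3) := by nlinarith [hveq, htdef, hδ₁0, hδ₁1]
      have hxn : (2:ℝ) ≤ (n:ℝ) := by exact_mod_cast hn2
      have hkr : (n:ℝ) - 1 ≤ 2 * (k:ℝ) := by
        have : (n:ℝ) ≤ 2 * (k:ℝ) + 1 := by exact_mod_cast hk'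
        linarith
      have hmr : (n:ℝ) ≤ 2 * (m:ℝ) := by exact_mod_cast hm'
      have hkm : ((n:ℝ)^2 - (n:ℝ)) / 4 ≤ (k:ℝ) * (m:ℝ) := by nlinarith
      have hqtv : 0 ≤ q * (t * v) := mul_nonneg hq0 (mul_nonneg ht0.le hv0.le)
      have hqt4 : (0:ℝ) ≤ q * t / 4 := by
        have := mul_nonneg hq0 ht0.le; linarith
      have h5 : ((n:ℝ)^2 - (n:ℝ)) / 4 * (q * (t * v)) ≤ ((k:ℝ) * (m:ℝ)) * (q * (t * v)) :=
        mul_le_mul_of_nonneg_right hkm hqtv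
      have h6 : t * a - ((n:ℝ)^2 - (n:ℝ)) / 4 * (q * (t * v))
          ≤ q * t / 4 * (n:ℝ) - q * t / 4 * ((δ₁/3) * (n:ℝ)^2) := by
        have inner : (1 - δ₁) * (n:ℝ)^2 - ((n:ℝ)^2 - (n:ℝ)) * v
            ≤ (n:ℝ) - (δ₁/3) * (n:ℝ)^2 := by
          nlinarith [mul_le_mul_of_nonneg_right hX (sq_nonneg (n:ℝ)),
            mul_le_mul_of_nonneg_left hv1 (by linarith : (0:ℝ) ≤ (n:ℝ))]
        have hmul := mul_le_mul_of_nonneg_left inner hqt4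
        have e1 : t * a - ((n:ℝ)^2 - (n:ℝ)) / 4 * (q * (t * v))
            = q * t / 4 * ((1 - δ₁) * (n:ℝ)^2 - ((n:ℝ)^2 - (n:ℝ)) * v) := by
          rw [hadef]; ring
        have e2 : q * t / 4 * ((n:ℝ) - (δ₁/3) * (n:ℝ)^2)
            = q * t / 4 * (n:ℝ) - q * t / 4 * ((δ₁/3) * (n:ℝ)^2) := by ring
        rw [e1, ← e2]
        exact hmul
      have h7 : q * t / 4 * (n:ℝ) ≤ (n:ℝ) := by
        have hqt : q * t / 4 ≤ 1 := by nlinarith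
        have := mul_le_mul_of_nonneg_right hqt (show (0:ℝ) ≤ (n:ℝ) by linarith)
        linarith
      have hrpow : (n:ℝ) ^ ((2:ℝ) - c) = (n:ℝ)^2 * (n:ℝ) ^ (-c) := by
        rw [show (2:ℝ) - c = (2:ℝ) + (-c) by ring, Real.rpow_add (by linarith),
          Real.rpow_two]
      have h8 : C₀ * (n:ℝ)^((2:ℝ) - c) ≤ q * t / 4 * ((δ₁/3) * (n:ℝ)^2) := by
        rw [hrpow, hC₀def]
        have hmul : K * (n:ℝ)^(-c) * ((δ₁^2/24) * (n:ℝ)^2) ≤ q * ((δ₁^2/24) * (n:ℝ)^2) :=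
          mul_le_mul_of_nonneg_right hqK (by positivity)
        have e1 : K * δ₁^2/24 * ((n:ℝ)^2 * (n:ℝ)^(-c))
            = K * (n:ℝ)^(-c) * ((δ₁^2/24) * (n:ℝ)^2) := by ring
        have e2 : q * t / 4 * ((δ₁/3) * (n:ℝ)^2) = q * (t * δ₁ / 12 * (n:ℝ)^2) := by ring
        rw [e1, e2]
        refine hmul.trans ?_
        have : (δ₁^2/24) * (n:ℝ)^2 = t * δ₁ / 12 * (n:ℝ)^2 := by rw [htdef]; ring
        rw [this]
      rw [hsv, hAdef]
      linarith [h5, h6, h7, h8]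
    calc Real.exp ((n:ℝ) * Real.log 2 + t * a - ((k:ℝ) * (m:ℝ)) * (q * (t / (1 + t))))
        ≤ Real.exp L := Real.exp_le_exp.mpr (hexpbound.trans hAn)
      _ = ε := by rw [hLdef]; exact Real.exp_log hε
  -- conclusion
  have hbadε : erMeasure n (p n) (hp1 n) bad ≤ ENNReal.ofReal ε :=
    hbad.trans (ENNReal.ofReal_le_ofReal hnum)
  have hsub : badᶜ ⊆ {G : EdgeIdx n → Bool | ∀ S : Finset (Fin n), S.card = n / 2 →
      (1 - δ) * (n : ℝ) ^ 2 * q / 4 ≤ (cut n S G : ℝ)} := by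
    intro G hG S hS
    have hG' : ∀ S' ∈ F, ¬ ((cut n S' G : ℝ) < a) := by
      intro S' hSF hlt
      exact hG (hbaddef ▸ Set.mem_biUnion hSF hlt)
    have hSF : S ∈ F := by
      rw [hFdef]
      exact Finset.mem_filter.mpr ⟨Finset.mem_univ _, hS⟩
    have hge : a ≤ (cut n S G : ℝ) := not_lt.mp (hG' S hSF)
    have hle : (1 - δ) * (n:ℝ)^2 * q / 4 ≤ a := by
      rw [hadef]
      nlinarith [mul_le_mul_of_nonneg_right (show (1:ℝ) - δ ≤ 1 - δ₁ by linarith)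
        (div_nonneg (mul_nonneg (sq_nonneg (n:ℝ)) hq0) (by norm_num : (0:ℝ) ≤ 4))]
    exact hle.trans hge
  rw [← hkdef] at hsub
  calc ENNReal.ofReal (1 - ε)
      ≤ 1 - ENNReal.ofReal ε := by
        rw [ENNReal.ofReal_sub _ hε.le, ENNReal.ofReal_one]
    _ ≤ 1 - erMeasure n (p n) (hp1 n) bad := tsub_le_tsub_left hbadε 1
    _ = erMeasure n (p n) (hp1 n) badᶜ :=
        (prob_compl_eq_one_sub MeasurableSet.of_discrete).symm
    _ ≤ _ := measure_mono hsub
end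

section
/- Under the G(n, p_n) Erdős–Rényi measure with p_n = Ω(n^{-c}) for some 0 ≤ c < 1/2, for every ε, δ > 0 there exists N such that for all n ≥ N, with probability at least 1 - ε, every subset S of the vertex set with |S| ≤ ⌊n/2⌋ satisfies c(S) ≤ (1+δ)·n²·p_n/4. -/
open MeasureTheory ProbabilityTheory Filter
open scoped ENNReal NNReal

open Finset

/-- weight of a single coordinate -/
def wt (pr : ℝ) (b : Bool) : ℝ := if b then pr else 1 - pr

lemma wt_nonneg {pr : ℝ} (h0 : 0 ≤ pr) (h1 : pr ≤ 1) (b : Bool) : 0 ≤ wt pr b := by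
  cases b <;> simp [wt] <;> linarith

lemma er_singleton (n : ℕ) (p : ℝ≥0∞) (hp : p ≤ 1) (G : EdgeIdx n → Bool) :
    erMeasure n p hp {G} = ENNReal.ofReal (∏ e : EdgeIdx n, wt p.toReal (G e)) := by
  have hpt : p ≠ ⊤ := fun h => by simp [h] at hp
  have h1 : ({G} : Set (EdgeIdx n → Bool)) = Set.pi Set.univ (fun e => {G e}) :=
    (Set.univ_pi_singleton G).symm
  rw [erMeasure, h1, Measure.pi_pi,
    ENNReal.ofReal_prod_of_nonneg (fun e _ => wt_nonneg ENNReal.toReal_nonneg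
      (ENNReal.toReal_le_of_le_ofReal one_pos.le (by simpa using hp)) (G e))]
  refine Finset.prod_congr rfl fun e _ => ?_
  have hp' : p.toNNReal ≤ 1 := by simpa using ENNReal.toNNReal_mono ENNReal.one_ne_top hp
  refine (PMF.toMeasure_apply_singleton _ _ (measurableSet_singleton _)).trans ?_
  show (PMF.bernoulli p.toNNReal hp') (G e) = _
  rw [PMF.bernoulli_apply]
  cases hGe : G e
  · simp only [Bool.cond_false, wt, Bool.false_eq_true, if_false]
    rw [ENNReal.coe_sub, ENNReal.coe_one, ENNReal.coe_toNNReal hpt,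
      ENNReal.ofReal_sub _ ENNReal.toReal_nonneg, ENNReal.ofReal_one,
      ENNReal.ofReal_toReal hpt]
  · simp [wt, ENNReal.coe_toNNReal hpt, ENNReal.ofReal_toReal hpt]

lemma er_finset (n : ℕ) (p : ℝ≥0∞) (hp : p ≤ 1) (F : Finset (EdgeIdx n → Bool)) :
    erMeasure n p hp ↑F = ENNReal.ofReal (∑ G ∈ F, ∏ e : EdgeIdx n, wt p.toReal (G e)) := by
  have h0 : 0 ≤ p.toReal := ENNReal.toReal_nonneg
  have h1 : p.toReal ≤ 1 :=
    ENNReal.toReal_le_of_le_ofReal one_pos.le (by simpa using hp)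
  have : (↑F : Set (EdgeIdx n → Bool)) = ⋃ G ∈ F, {G} := by
    ext g; simp
  rw [this, measure_biUnion_finset ?_ (fun G _ => measurableSet_singleton G),
    ENNReal.ofReal_sum_of_nonneg
      (fun G _ => Finset.prod_nonneg fun e _ => wt_nonneg h0 h1 (G e))]
  · exact Finset.sum_congr rfl fun G _ => er_singleton n p hp G
  · intro a _ b _ hab
    simp [Function.onFun, Set.disjoint_singleton, hab]

lemma er_setOf (n : ℕ) (p : ℝ≥0∞) (hp : p ≤ 1) (P : (EdgeIdx n → Bool) → Prop)
    [DecidablePred P] :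
    erMeasure n p hp {G | P G} =
      ENNReal.ofReal (∑ G ∈ Finset.univ.filter P, ∏ e : EdgeIdx n, wt p.toReal (G e)) := by
  have : {G | P G} = (↑(Finset.univ.filter P) : Set (EdgeIdx n → Bool)) := by
    ext G; simp
  rw [this, er_finset]

lemma chernoff (n : ℕ) (pr : ℝ) (h0 : 0 ≤ pr) (h1 : pr ≤ 1) (A : Finset (EdgeIdx n))
    (t a : ℝ) (ht : 0 ≤ t) :
    ∑ G ∈ Finset.univ.filter (fun G : EdgeIdx n → Bool =>
        a < ((A.filter fun e => G e = true).card : ℝ)),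
      ∏ e : EdgeIdx n, wt pr (G e)
    ≤ Real.exp (-t * a) * (1 - pr + pr * Real.exp t) ^ A.card := by
  classical
  set X : (EdgeIdx n → Bool) → ℝ := fun G => ((A.filter fun e => G e = true).card : ℝ) with hXdef
  have hWnn : ∀ G : EdgeIdx n → Bool, 0 ≤ ∏ e : EdgeIdx n, wt pr (G e) :=
    fun G => Finset.prod_nonneg fun e _ => wt_nonneg h0 h1 (G e)
  have hX : ∀ G : EdgeIdx n → Bool,
      X G = ∑ e : EdgeIdx n, (if e ∈ A ∧ G e = true then (1:ℝ) else 0) := by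
    intro G
    have : ∀ e : EdgeIdx n, (if e ∈ A ∧ G e = true then (1:ℝ) else 0)
        = if e ∈ A then (if G e = true then (1:ℝ) else 0) else 0 := by
      intro e; by_cases hA : e ∈ A <;> by_cases hG : G e = true <;> simp [hA, hG]
    rw [Finset.sum_congr rfl (fun e _ => this e), Finset.sum_ite_mem,
      Finset.univ_inter, hXdef]
    simp only []
    rw [Finset.card_filter]
    push_cast
    rfl
  have key : ∀ G : EdgeIdx n → Bool,
      Real.exp (t * (X G - a)) * ∏ e : EdgeIdx n, wt pr (G e)
      = Real.exp (-t * a) *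
        ∏ e : EdgeIdx n, (wt pr (G e) *
          Real.exp (t * (if e ∈ A ∧ G e = true then (1:ℝ) else 0))) := by
    intro G
    rw [Finset.prod_mul_distrib, ← Real.exp_sum, ← Finset.mul_sum, ← hX G,
      show t * (X G - a) = -t * a + t * X G by ring, Real.exp_add]
    ring
  calc ∑ G ∈ Finset.univ.filter (fun G : EdgeIdx n → Bool => a < X G),
        ∏ e : EdgeIdx n, wt pr (G e)
      ≤ ∑ G ∈ Finset.univ.filter (fun G : EdgeIdx n → Bool => a < X G),
        Real.exp (t * (X G - a)) * ∏ e : EdgeIdx n, wt pr (G e) := by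
        refine Finset.sum_le_sum fun G hG => ?_
        have hG' : a < X G := (Finset.mem_filter.mp hG).2
        have : (1:ℝ) ≤ Real.exp (t * (X G - a)) := by
          rw [Real.one_le_exp_iff]
          exact mul_nonneg ht (by linarith)
        exact le_mul_of_one_le_left (hWnn G) this
    _ ≤ ∑ G : EdgeIdx n → Bool, Real.exp (t * (X G - a)) * ∏ e : EdgeIdx n, wt pr (G e) := by
        refine Finset.sum_le_sum_of_subset_of_nonneg (Finset.filter_subset _ _)
          fun G _ _ => mul_nonneg (Real.exp_nonneg _) (hWnn G)
    _ = Real.exp (-t * a) * ∑ G : EdgeIdx n → Bool,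
          ∏ e : EdgeIdx n, (wt pr (G e) *
            Real.exp (t * (if e ∈ A ∧ G e = true then (1:ℝ) else 0))) := by
        rw [Finset.mul_sum]
        exact Finset.sum_congr rfl fun G _ => key G
    _ = Real.exp (-t * a) * ∏ e : EdgeIdx n, ∑ b : Bool,
          (wt pr b * Real.exp (t * (if e ∈ A ∧ b = true then (1:ℝ) else 0))) := by
        rw [Finset.prod_univ_sum (fun _ : EdgeIdx n => (Finset.univ : Finset Bool))
          (fun e b => wt pr b * Real.exp (t * (if e ∈ A ∧ b = true then (1:ℝ) else 0))),
          Fintype.piFinset_univ]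
    _ = Real.exp (-t * a) * ∏ e : EdgeIdx n,
          (if e ∈ A then 1 - pr + pr * Real.exp t else 1) := by
        congr 1
        refine Finset.prod_congr rfl fun e _ => ?_
        by_cases hA : e ∈ A <;> simp [Fintype.sum_bool, wt, hA] <;> ring
    _ = Real.exp (-t * a) * (1 - pr + pr * Real.exp t) ^ A.card := by
        rw [Finset.prod_ite_mem, Finset.univ_inter, Finset.prod_const]

open Classical in
noncomputable def crossSet (n : ℕ) (S : Finset (Fin n)) : Finset (EdgeIdx n) :=
  Finset.univ.filter fun e : EdgeIdx n => (∃ u ∈ e.1, u ∈ S) ∧ (∃ v ∈ e.1, v ∉ S)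

lemma cut_eq (n : ℕ) (S : Finset (Fin n)) (G : EdgeIdx n → Bool) :
    cut n S G = ((crossSet n S).filter fun e => G e = true).card := by
  classical
  unfold cut crossSet
  rw [Finset.filter_filter]
  congr 1
  ext e
  simp only [Finset.mem_filter, Finset.mem_univ, true_and]
  tauto

lemma crossSet_card (n : ℕ) (S : Finset (Fin n)) :
    ((crossSet n S).card : ℝ) ≤ (n : ℝ) ^ 2 / 4 := by
  classical
  have h1 : (crossSet n S).card ≤ (S ×ˢ Sᶜ).card := by
    rw [← Finset.card_image_of_injective (crossSet n S) Subtype.val_injective]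
    refine le_trans (Finset.card_le_card ?_)
      (Finset.card_image_le (s := S ×ˢ Sᶜ) (f := fun uv => ({uv.1, uv.2} : Finset (Fin n))))
    intro x hx
    simp only [Finset.mem_image] at hx
    obtain ⟨e, he, rfl⟩ := hx
    simp only [crossSet, Finset.mem_filter, Finset.mem_univ, true_and] at he
    obtain ⟨⟨u, hu, huS⟩, ⟨v, hv, hvS⟩⟩ := he
    have huv : u ≠ v := fun h => hvS (h ▸ huS)
    have hsub : ({u, v} : Finset (Fin n)) ⊆ e.1 := by
      intro x hx; simp only [Finset.mem_insert, Finset.mem_singleton] at hx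
      rcases hx with rfl | rfl <;> assumption
    have hcard : ({u, v} : Finset (Fin n)).card = 2 := by
      rw [Finset.card_insert_of_notMem (by simpa using huv), Finset.card_singleton]
    have : e.1 = ({u, v} : Finset (Fin n)) :=
      (Finset.eq_of_subset_of_card_le hsub (by rw [hcard, e.2])).symm
    simp only [Finset.mem_image]
    exact ⟨(u, v), Finset.mem_product.mpr ⟨huS, Finset.mem_compl.mpr hvS⟩, this.symm⟩
  have h2 : (S ×ˢ Sᶜ).card = S.card * (n - S.card) := by
    rw [Finset.card_product, Finset.card_compl, Fintype.card_fin]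
  have hk : S.card ≤ n := by
    simpa using Finset.card_le_card (Finset.subset_univ S)
  have : ((crossSet n S).card : ℝ) ≤ (S.card : ℝ) * ((n : ℝ) - S.card) := by
    calc ((crossSet n S).card : ℝ) ≤ ((S ×ˢ Sᶜ).card : ℝ) := by exact_mod_cast h1
      _ = (S.card : ℝ) * ((n : ℝ) - S.card) := by
          rw [h2]; push_cast [Nat.cast_sub hk]; ring
  nlinarith [sq_nonneg ((n : ℝ) - 2 * S.card)]

lemma tail_bound (n : ℕ) (p : ℝ≥0∞) (hp : p ≤ 1) (δ : ℝ) (hδ : 0 < δ) :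
    erMeasure n p hp {G | ∃ S : Finset (Fin n),
        (1 + δ) * (n : ℝ) ^ 2 * p.toReal / 4 < (cut n S G : ℝ)}
    ≤ ENNReal.ofReal ((2:ℝ) ^ n *
        Real.exp (-((1 + δ) * Real.log (1 + δ) - δ) * ((n : ℝ) ^ 2 * p.toReal / 4))) := by
  classical
  set pr := p.toReal with hpr
  have h0 : 0 ≤ pr := ENNReal.toReal_nonneg
  have h1 : pr ≤ 1 := ENNReal.toReal_le_of_le_ofReal one_pos.le (by simpa using hp)
  set t := Real.log (1 + δ) with htdef
  have ht : 0 ≤ t := Real.log_nonneg (by linarith)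
  have het : Real.exp t = 1 + δ := Real.exp_log (by linarith)
  set a := (1 + δ) * (n : ℝ) ^ 2 * pr / 4 with hadef
  set E := Real.exp (-((1 + δ) * Real.log (1 + δ) - δ) * ((n : ℝ) ^ 2 * pr / 4)) with hEdef
  have hset : {G : EdgeIdx n → Bool | ∃ S : Finset (Fin n), a < (cut n S G : ℝ)}
      = ⋃ S ∈ (Finset.univ : Finset (Finset (Fin n))), {G | a < (cut n S G : ℝ)} := by
    ext G; simp
  have hS : ∀ S : Finset (Fin n),
      erMeasure n p hp {G | a < (cut n S G : ℝ)} ≤ ENNReal.ofReal E := by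
    intro S
    have hrw : ∀ G : EdgeIdx n → Bool, ((cut n S G : ℝ))
        = (((crossSet n S).filter fun e => G e = true).card : ℝ) := by
      intro G; rw [cut_eq]
    simp only [hrw]
    rw [er_setOf n p hp _]
    apply ENNReal.ofReal_le_ofReal
    refine le_trans (chernoff n pr h0 h1 (crossSet n S) t a ht) ?_
    have hbase : (0:ℝ) ≤ 1 - pr + pr * Real.exp t := by nlinarith [Real.exp_pos t, Real.one_le_exp ht]
    have hb2 : 1 - pr + pr * Real.exp t ≤ Real.exp (pr * δ) := by
      have := Real.add_one_le_exp (pr * δ)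
      rw [het]; nlinarith
    calc Real.exp (-t * a) * (1 - pr + pr * Real.exp t) ^ (crossSet n S).card
        ≤ Real.exp (-t * a) * Real.exp (pr * δ) ^ (crossSet n S).card := by
          apply mul_le_mul_of_nonneg_left _ (Real.exp_nonneg _)
          exact pow_le_pow_left₀ hbase hb2 _
      _ = Real.exp (-t * a + (crossSet n S).card * (pr * δ)) := by
          rw [Real.exp_add, ← Real.exp_nat_mul]
      _ ≤ E := by
          rw [hEdef]
          apply Real.exp_le_exp.mpr
          have hcard := crossSet_card n S
          have hprδ : 0 ≤ pr * δ := mul_nonneg h0 hδ.le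
          have : ((crossSet n S).card : ℝ) * (pr * δ) ≤ (n:ℝ)^2/4 * (pr * δ) :=
            mul_le_mul_of_nonneg_right hcard hprδ
          rw [hadef, htdef]
          nlinarith
  have hcount : (Finset.univ : Finset (Finset (Fin n))).card = 2 ^ n := by
    simp [Finset.card_univ]
  calc erMeasure n p hp {G | ∃ S : Finset (Fin n), a < (cut n S G : ℝ)}
      ≤ ∑ S : Finset (Fin n), erMeasure n p hp {G | a < (cut n S G : ℝ)} := by
        rw [hset]; exact measure_biUnion_finset_le _ _
    _ ≤ ∑ _S : Finset (Fin n), ENNReal.ofReal E := Finset.sum_le_sum fun S _ => hS S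
    _ = (2 ^ n : ℕ) * ENNReal.ofReal E := by
        rw [Finset.sum_const, hcount, nsmul_eq_mul]
    _ = ENNReal.ofReal ((2:ℝ) ^ n * E) := by
        rw [ENNReal.ofReal_mul (by positivity)]
        congr 1
        rw [show ((2:ℝ)^n) = ((2^n : ℕ) : ℝ) by push_cast; ring,
          ENNReal.ofReal_natCast]

set_option linter.unnecessarySeqFocus false in
instance erMeasure.isProb (n : ℕ) (p : ℝ≥0∞) (hp : p ≤ 1) :
    IsProbabilityMeasure (erMeasure n p hp) := by
  unfold erMeasure; infer_instance

lemma eta_pos {δ : ℝ} (hδ : 0 < δ) : 0 < (1 + δ) * Real.log (1 + δ) - δ := by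
  have hL : 0 < Real.log (1 + δ) := Real.log_pos (by linarith)
  have h := Real.add_one_lt_exp (x := -Real.log (1 + δ)) (by linarith)
  rw [Real.exp_neg, Real.exp_log (by linarith : (0:ℝ) < 1 + δ)] at h
  have hinv : (1 + δ) * (1 + δ)⁻¹ = 1 := mul_inv_cancel₀ (by linarith)
  nlinarith

/-- High-probability upper bound on all small cuts: if `p_n = Ω(n^{-c})`
with `0 ≤ c < 1/2`, then w.h.p. every `S` with `|S| ≤ ⌊n/2⌋` has
`c(S) ≤ (1 + δ) n² p_n / 4`. -/
theorem stmt_8 (c : ℝ) (hc0 : 0 ≤ c) (hc : c < 1 / 2)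
    (p : ℕ → ℝ≥0∞) (hp1 : ∀ n, p n ≤ 1)
    (hΩ : ∃ K : ℝ, 0 < K ∧ ∀ᶠ n : ℕ in atTop, K * (n : ℝ) ^ (-c) ≤ (p n).toReal) :
    ∀ ε : ℝ, 0 < ε → ∀ δ : ℝ, 0 < δ → ∃ N : ℕ, ∀ n ≥ N,
      ENNReal.ofReal (1 - ε) ≤
        erMeasure n (p n) (hp1 n)
          {G | ∀ S : Finset (Fin n), S.card ≤ n / 2 →
            (cut n S G : ℝ) ≤ (1 + δ) * (n : ℝ) ^ 2 * (p n).toReal / 4} := by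
  intro ε hε δ hδ
  obtain ⟨K, hK, hev⟩ := hΩ
  obtain ⟨N₀, hN₀⟩ := eventually_atTop.mp hev
  set η := (1 + δ) * Real.log (1 + δ) - δ with hηdef
  have hη : 0 < η := eta_pos hδ
  set M : ℝ := 4 * (Real.log 2 + 1) / (η * K) with hMdef
  have hM : 0 < M := by
    apply div_pos _ (mul_pos hη hK)
    have := Real.log_pos (by norm_num : (1:ℝ) < 2)
    linarith
  refine ⟨max (max N₀ ⌈M ^ 2⌉₊) (max ⌈-Real.log ε⌉₊ 1), fun n hn => ?_⟩
  have hn0 : N₀ ≤ n := le_trans (le_max_left _ _) (le_trans (le_max_left _ _) hn)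
  have hn1 : ⌈M ^ 2⌉₊ ≤ n := le_trans (le_max_right _ _) (le_trans (le_max_left _ _) hn)
  have hn2 : ⌈-Real.log ε⌉₊ ≤ n := le_trans (le_max_left _ _) (le_trans (le_max_right _ _) hn)
  have hn3 : 1 ≤ n := le_trans (le_max_right _ _) (le_trans (le_max_right _ _) hn)
  have hn3' : (1:ℝ) ≤ (n:ℝ) := by exact_mod_cast hn3
  set pr := (p n).toReal with hprdef
  have hpr0 : 0 ≤ pr := ENNReal.toReal_nonneg
  -- key real estimate
  have hprK : K * (n:ℝ) ^ (-c) ≤ pr := hN₀ n hn0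
  have hsqrtn : 0 < Real.sqrt n := Real.sqrt_pos.mpr (by linarith)
  have hrpow : (n:ℝ) ^ (-(1/2 : ℝ)) ≤ (n:ℝ) ^ (-c) :=
    Real.rpow_le_rpow_of_exponent_le hn3' (by linarith)
  have hhalf : (n:ℝ) ^ (-(1/2 : ℝ)) = (Real.sqrt n)⁻¹ := by
    rw [Real.rpow_neg (by positivity), Real.sqrt_eq_rpow]
  have hprsqrt : K * (Real.sqrt n)⁻¹ ≤ pr := by
    refine le_trans ?_ hprK
    rw [← hhalf]
    exact mul_le_mul_of_nonneg_left hrpow hK.le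
  have hQ : (η * K / 4) * ((n:ℝ) * Real.sqrt n) ≤ η * ((n:ℝ)^2 * pr / 4) := by
    have h1 : K * ((n:ℝ)^2 * (Real.sqrt n)⁻¹) ≤ (n:ℝ)^2 * pr := by
      have := mul_le_mul_of_nonneg_left hprsqrt (by positivity : (0:ℝ) ≤ (n:ℝ)^2)
      linarith [this]
    have h2 : (n:ℝ)^2 * (Real.sqrt n)⁻¹ = (n:ℝ) * Real.sqrt n := by
      have hs : Real.sqrt n * Real.sqrt n = (n:ℝ) := Real.mul_self_sqrt (by positivity)
      field_simp
      nlinarith [hs]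
    rw [h2] at h1
    calc (η * K / 4) * ((n:ℝ) * Real.sqrt n) = η / 4 * (K * ((n:ℝ) * Real.sqrt n)) := by ring
      _ ≤ η / 4 * ((n:ℝ)^2 * pr) := by
          apply mul_le_mul_of_nonneg_left h1 (by positivity)
      _ = η * ((n:ℝ)^2 * pr / 4) := by ring
  have hMn : Real.log 2 + 1 ≤ (η * K / 4) * Real.sqrt n := by
    have h1 : M ^ 2 ≤ (n:ℝ) := le_trans (Nat.le_ceil _) (by exact_mod_cast hn1)
    have h2 : M ≤ Real.sqrt n := by
      rw [show M = Real.sqrt (M^2) by rw [Real.sqrt_sq hM.le]]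
      exact Real.sqrt_le_sqrt h1
    have h3 : (η * K / 4) * M ≤ (η * K / 4) * Real.sqrt n :=
      mul_le_mul_of_nonneg_left h2 (by positivity)
    have h4 : (η * K / 4) * M = Real.log 2 + 1 := by
      rw [hMdef]; field_simp
    linarith
  -- the scalar bound
  have hscalar : (2:ℝ) ^ n * Real.exp (-η * ((n:ℝ)^2 * pr / 4)) ≤ ε := by
    have h2n : (2:ℝ) ^ n = Real.exp ((n:ℝ) * Real.log 2) := by
      rw [Real.exp_nat_mul, Real.exp_log (by norm_num : (0:ℝ) < 2)]
    rw [h2n, ← Real.exp_add]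
    have hlog : (n:ℝ) * Real.log 2 + -η * ((n:ℝ)^2 * pr / 4) ≤ -(n:ℝ) := by
      have e1 : (Real.log 2 + 1) * (n:ℝ) ≤ (η * K / 4) * Real.sqrt n * (n:ℝ) :=
        mul_le_mul_of_nonneg_right hMn (by positivity)
      have e2 : (η * K / 4) * Real.sqrt n * (n:ℝ) = (η * K / 4) * ((n:ℝ) * Real.sqrt n) := by
        ring
      nlinarith [hQ]
    calc Real.exp ((n:ℝ) * Real.log 2 + -η * ((n:ℝ)^2 * pr / 4))
        ≤ Real.exp (-(n:ℝ)) := Real.exp_le_exp.mpr hlog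
      _ ≤ ε := by
          rw [show ε = Real.exp (Real.log ε) from (Real.exp_log hε).symm]
          apply Real.exp_le_exp.mpr
          have : -Real.log ε ≤ (n:ℝ) := le_trans (Nat.le_ceil _) (by exact_mod_cast hn2)
          linarith
  -- measure of bad event
  set Good := {G : EdgeIdx n → Bool | ∀ S : Finset (Fin n), S.card ≤ n / 2 →
      (cut n S G : ℝ) ≤ (1 + δ) * (n : ℝ) ^ 2 * pr / 4} with hGood
  have hGmeas : MeasurableSet Good := (Set.toFinite _).measurableSet
  have hbad : erMeasure n (p n) (hp1 n) Goodᶜ ≤ ENNReal.ofReal ε := by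
    have hsubset : Goodᶜ ⊆ {G : EdgeIdx n → Bool | ∃ S : Finset (Fin n),
        (1 + δ) * (n : ℝ) ^ 2 * pr / 4 < (cut n S G : ℝ)} := by
      intro G hG
      simp only [hGood, Set.mem_compl_iff, Set.mem_setOf_eq, not_forall] at hG
      obtain ⟨S, _, hS2⟩ := hG
      exact ⟨S, lt_of_not_ge hS2⟩
    refine le_trans (measure_mono hsubset) (le_trans (tail_bound n (p n) (hp1 n) δ hδ) ?_)
    exact ENNReal.ofReal_le_ofReal hscalar
  -- conclude
  have hcomp := measure_add_measure_compl (μ := erMeasure n (p n) (hp1 n)) hGmeas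
  rw [measure_univ] at hcomp
  by_cases hε1 : ε ≤ 1
  · have hsum : ENNReal.ofReal (1 - ε) + ENNReal.ofReal ε = 1 := by
      rw [← ENNReal.ofReal_add (by linarith) hε.le]
      norm_num
    have hne : erMeasure n (p n) (hp1 n) Goodᶜ ≠ ⊤ := measure_ne_top _ _
    rw [← ENNReal.add_le_add_iff_right hne]
    calc ENNReal.ofReal (1 - ε) + erMeasure n (p n) (hp1 n) Goodᶜ
        ≤ ENNReal.ofReal (1 - ε) + ENNReal.ofReal ε := add_le_add_right hbad _
      _ = 1 := hsum
      _ = erMeasure n (p n) (hp1 n) Good + erMeasure n (p n) (hp1 n) Goodᶜ := hcomp.symm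
  · have : ENNReal.ofReal (1 - ε) = 0 := by
      rw [ENNReal.ofReal_eq_zero]; linarith
    rw [this]
    exact zero_le
end

section
/- Under G(n, p_n) with p_n = Ω(n^{-c}), 0 ≤ c < 1/2: for all ε, δ > 0 there exists N such that for all n ≥ N, P[GAPCW(G_n) < 1+δ] > 1-ε, where GAPCW(G) = MAXCW(G)/MINCW(G). -/
set_option maxHeartbeats 1600000

open MeasureTheory ProbabilityTheory Filter
open scoped ENNReal NNReal

section Aux
open Finset

namespace S11
variable {n : ℕ}

instance : MeasurableSingletonClass (EdgeIdx n → Bool) := by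
  constructor
  intro G
  have : ({G} : Set (EdgeIdx n → Bool)) = Set.univ.pi fun e => {G e} :=
    (Set.univ_pi_singleton G).symm
  rw [this]
  exact MeasurableSet.univ_pi fun e => MeasurableSet.singleton (G e)

lemma meas_all (A : Set (EdgeIdx n → Bool)) : MeasurableSet A :=
  A.to_countable.measurableSet

/-- real weight of a configuration -/
noncomputable def w (n : ℕ) (q : ℝ) (G : EdgeIdx n → Bool) : ℝ :=
  ∏ e : EdgeIdx n, (if G e then q else 1 - q)

lemma w_nonneg {q : ℝ} (h0 : 0 ≤ q) (h1 : q ≤ 1) (G : EdgeIdx n → Bool) :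
    0 ≤ w n q G :=
  Finset.prod_nonneg fun e _ => by by_cases h : G e <;> simp [h, h0, h1, sub_nonneg, w]

lemma factorize (f : EdgeIdx n → Bool → ℝ) :
    ∑ G : EdgeIdx n → Bool, ∏ e : EdgeIdx n, f e (G e)
      = ∏ e : EdgeIdx n, (f e true + f e false) := by
  classical
  rw [show (∏ e : EdgeIdx n, (f e true + f e false))
      = ∏ e : EdgeIdx n, ∑ b ∈ (Finset.univ : Finset Bool), f e b by simp]
  rw [Finset.prod_univ_sum, Fintype.piFinset_univ]

lemma erMeasure_singleton (p : ℝ≥0∞) (hp : p ≤ 1) (G : EdgeIdx n → Bool) :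
    erMeasure n p hp {G} = ENNReal.ofReal (w n p.toReal G) := by
  have hne : p ≠ ⊤ := (lt_of_le_of_lt hp (by norm_num)).ne
  have hq1 : p.toReal ≤ 1 := by
    rw [show (1:ℝ) = (1:ℝ≥0∞).toReal by simp]
    exact ENNReal.toReal_mono (by norm_num) hp
  rw [erMeasure, ← Set.univ_pi_singleton G, Measure.pi_pi, w,
    ENNReal.ofReal_prod_of_nonneg (fun e _ => by
      by_cases h : G e <;> simp [h, sub_nonneg, hq1])]
  congr 1 with e
  rw [PMF.toMeasure_apply_singleton _ _ (MeasurableSet.singleton _)]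
  erw [PMF.bernoulli_apply]
  by_cases h : G e
  · simp [h, ENNReal.ofReal_toReal hne, ENNReal.coe_toNNReal hne]
  · simp only [h, if_false, Bool.cond_false]
    rw [show (if false = true then p.toReal else 1 - p.toReal) = 1 - p.toReal from rfl,
      ENNReal.ofReal_sub _ ENNReal.toReal_nonneg, ENNReal.ofReal_toReal hne,
      ENNReal.ofReal_one]
    rw [ENNReal.coe_sub, ENNReal.coe_one, ENNReal.coe_toNNReal hne]

lemma erMeasure_apply (p : ℝ≥0∞) (hp : p ≤ 1) (A : Set (EdgeIdx n → Bool)) :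
    erMeasure n p hp A = ENNReal.ofReal (∑ G ∈ A.toFinite.toFinset, w n p.toReal G) := by
  classical
  have hq0 : (0:ℝ) ≤ p.toReal := ENNReal.toReal_nonneg
  have hq1 : p.toReal ≤ 1 := by
    rw [show (1:ℝ) = (1:ℝ≥0∞).toReal by simp]
    exact ENNReal.toReal_mono (by norm_num) hp
  rw [ENNReal.ofReal_sum_of_nonneg (fun G _ => w_nonneg hq0 hq1 G)]
  have : A = ⋃ G ∈ A.toFinite.toFinset, ({G} : Set (EdgeIdx n → Bool)) := by
    ext x; simp [Set.Finite.mem_toFinset]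
  rw [this, measure_biUnion_finset]
  · exact Finset.sum_congr (by congr) fun G _ => erMeasure_singleton p hp G
  · intro x _ y _ hxy
    simp [Function.onFun, Set.disjoint_singleton, hxy]
  · exact fun G _ => MeasurableSet.singleton G

end S11

namespace S11b
open S11

noncomputable def cross (n : ℕ) (S : Finset (Fin n)) : Finset (EdgeIdx n) :=
  letI := Classical.dec
  Finset.univ.filter fun e : EdgeIdx n => (∃ u ∈ e.1, u ∈ S) ∧ (∃ v ∈ e.1, v ∉ S)

noncomputable def cutR (n : ℕ) (S : Finset (Fin n)) (G : EdgeIdx n → Bool) : ℝ :=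
  ∑ e ∈ cross n S, (if G e then 1 else 0)

variable {n : ℕ}

lemma cutR_nonneg (S : Finset (Fin n)) (G : EdgeIdx n → Bool) : 0 ≤ cutR n S G :=
  Finset.sum_nonneg fun e _ => by by_cases h : G e <;> simp [h]

lemma cut_eq (S : Finset (Fin n)) (G : EdgeIdx n → Bool) :
    ((cut n S G : ℕ) : ℝ) = cutR n S G := by
  classical
  unfold cut cutR cross
  rw [Finset.card_filter]
  push_cast
  rw [Finset.sum_filter]
  apply Finset.sum_congr (by congr!) fun e _ => ?_
  by_cases h1 : G e = true <;>
    by_cases h2 : (∃ u ∈ e.1, u ∈ S) ∧ (∃ v ∈ e.1, v ∉ S) <;> simp [h1, h2]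

lemma card_cross (S : Finset (Fin n)) :
    (cross n S).card = S.card * (n - S.card) := by
  classical
  have h1 : (cross n S).card
      = (Finset.univ.filter fun E : Finset (Fin n) =>
          E.card = 2 ∧ (∃ u ∈ E, u ∈ S) ∧ (∃ v ∈ E, v ∉ S)).card := by
    apply Finset.card_nbij (fun e => e.1)
    · intro e he
      simp only [cross, Finset.mem_coe, Finset.mem_filter, Finset.mem_univ, true_and] at he ⊢
      exact ⟨e.2, he⟩
    · exact Subtype.val_injective.injOn
    · intro E hE
      simp only [Finset.coe_filter, Set.mem_setOf_eq, Finset.mem_univ, true_and] at hE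
      exact ⟨⟨E, hE.1⟩, by simpa [cross] using hE.2, rfl⟩
  have h2 : (S ×ˢ Sᶜ).card
      = (Finset.univ.filter fun E : Finset (Fin n) =>
          E.card = 2 ∧ (∃ u ∈ E, u ∈ S) ∧ (∃ v ∈ E, v ∉ S)).card := by
    apply Finset.card_nbij (fun uv => {uv.1, uv.2})
    · rintro ⟨u, v⟩ huv
      simp only [Finset.mem_coe, Finset.mem_product, Finset.mem_compl] at huv
      have hne : u ≠ v := fun h => huv.2 (h ▸ huv.1)
      simp only [Finset.mem_coe, Finset.mem_filter, Finset.mem_univ, true_and]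
      refine ⟨Finset.card_pair hne, ⟨u, by simp, huv.1⟩, ⟨v, by simp, huv.2⟩⟩
    · rintro ⟨u, v⟩ huv ⟨u', v'⟩ huv' h
      simp only [Finset.coe_product, Set.mem_prod, Finset.mem_coe, Finset.mem_compl] at huv huv'
      have h2 : ({u, v} : Finset (Fin n)) = {u', v'} := h
      have hu' : u' ∈ ({u, v} : Finset (Fin n)) := by rw [h2]; simp
      have hv' : v' ∈ ({u, v} : Finset (Fin n)) := by rw [h2]; simp
      simp only [Finset.mem_insert, Finset.mem_singleton] at hu' hv'
      have hu : u' = u := hu'.resolve_right (fun hh => huv.2 (hh ▸ huv'.1))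
      have hv : v' = v := hv'.resolve_left (fun hh => huv'.2 (hh ▸ huv.1))
      simp [hu, hv, Prod.ext_iff]
    · intro E hE
      simp only [Finset.coe_filter, Set.mem_setOf_eq, Finset.mem_univ, true_and] at hE
      obtain ⟨hcard, ⟨u, huE, huS⟩, ⟨v, hvE, hvS⟩⟩ := hE
      have hne : u ≠ v := fun h => hvS (h ▸ huS)
      have hsub : ({u, v} : Finset (Fin n)) ⊆ E := by
        intro x hx; simp only [Finset.mem_insert, Finset.mem_singleton] at hx
        rcases hx with rfl | rfl <;> assumption
      have hEeq : ({u, v} : Finset (Fin n)) = E :=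
        Finset.eq_of_subset_of_card_le hsub (by rw [hcard, Finset.card_pair hne])
      exact ⟨(u, v), by simp [huS, hvS], hEeq⟩
  rw [h1, ← h2, Finset.card_product, Finset.card_compl]
  simp

lemma cross_expectation (S : Finset (Fin n)) (q : ℝ) :
    True := trivial

end S11b

namespace S11c
open S11 S11b
variable {n : ℕ}

lemma exp_quad {x : ℝ} (hx : |x| ≤ 1) : Real.exp x ≤ 1 + x + x ^ 2 := by
  have h := Real.exp_bound hx (by norm_num : 0 < 2)
  have hs : ∑ m ∈ Finset.range 2, x ^ m / (m.factorial : ℝ) = 1 + x := by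
    simp [Finset.sum_range_succ]
  rw [hs] at h
  norm_num [Nat.factorial] at h
  have h2 : |x| ^ 2 = x ^ 2 := sq_abs x
  nlinarith [le_abs_self (Real.exp x - (1 + x)), sq_nonneg x]

lemma tail_bound (q s a σ : ℝ) (hq0 : 0 ≤ q) (hq1 : q ≤ 1) (hs : 0 ≤ s)
    (C : Finset (EdgeIdx n)) (P : (EdgeIdx n → Bool) → Prop) [DecidablePred P]
    (hP : ∀ G, P G → a ≤ σ * ∑ e ∈ C, (if G e then (1:ℝ) else 0)) :
    ∑ G ∈ Finset.univ.filter P, w n q G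
      ≤ Real.exp (-(s * a)) * Real.exp ((C.card : ℝ) * (q * (Real.exp (σ * s) - 1))) := by
  classical
  set cR : (EdgeIdx n → Bool) → ℝ := fun G => ∑ e ∈ C, (if G e then (1:ℝ) else 0) with hcR
  set E : ℝ := Real.exp (σ * s) with hE
  have hE0 : 0 ≤ E := (Real.exp_pos _).le
  -- step 1: insert exponential factor and extend to univ
  have step1 : ∑ G ∈ Finset.univ.filter P, w n q G
      ≤ ∑ G : EdgeIdx n → Bool, w n q G * Real.exp (s * (σ * cR G - a)) := by
    refine le_trans (Finset.sum_le_sum fun G hG => ?_)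
      (Finset.sum_le_sum_of_subset_of_nonneg (Finset.filter_subset _ _) fun G _ _ =>
        mul_nonneg (w_nonneg hq0 hq1 G) (Real.exp_pos _).le)
    have h1 : (0:ℝ) ≤ s * (σ * cR G - a) := by
      have := hP G (Finset.mem_filter.mp hG).2
      have : 0 ≤ σ * cR G - a := by linarith
      positivity
    nlinarith [w_nonneg hq0 hq1 G, Real.one_le_exp (le_of_eq rfl) , Real.exp_pos (s * (σ * cR G - a)), Real.add_one_le_exp (s * (σ * cR G - a))]
  -- step 2: factor out exp(-sa)
  have step2 : ∀ G, w n q G * Real.exp (s * (σ * cR G - a))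
      = Real.exp (-(s * a)) * (w n q G * Real.exp ((σ * s) * cR G)) := by
    intro G
    rw [show s * (σ * cR G - a) = (σ * s) * cR G + (-(s * a)) by ring, Real.exp_add]
    ring
  -- step 3: product formula
  have step3 : ∀ G : EdgeIdx n → Bool, w n q G * Real.exp ((σ * s) * cR G)
      = ∏ e : EdgeIdx n, ((if G e then q else 1 - q) *
          (if e ∈ C then (if G e then E else 1) else 1)) := by
    intro G
    rw [Finset.prod_mul_distrib]
    congr 1
    rw [hcR, Finset.mul_sum, Real.exp_sum]
    have : ∀ e ∈ C, Real.exp ((σ * s) * (if G e then (1:ℝ) else 0))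
        = (if G e then E else 1) := by
      intro e _
      by_cases h : G e <;> simp [h, hE]
    rw [Finset.prod_congr rfl this]
    rw [show (∏ e ∈ C, (if G e then E else 1))
        = ∏ e ∈ Finset.univ ∩ C, (if G e then E else 1) by rw [Finset.univ_inter]]
    rw [← Finset.prod_ite_mem]
  have step4 : ∑ G : EdgeIdx n → Bool, ∏ e : EdgeIdx n,
      ((if G e then q else 1 - q) * (if e ∈ C then (if G e then E else 1) else 1))
      = ∏ e : EdgeIdx n, (if e ∈ C then 1 - q + q * E else 1) := by
    rw [factorize (fun e b => (if b then q else 1 - q) * (if e ∈ C then (if b then E else 1) else 1))]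
    apply Finset.prod_congr rfl
    intro e _
    by_cases h : e ∈ C <;> simp [h] <;> ring
  have step5 : (∏ e : EdgeIdx n, (if e ∈ C then 1 - q + q * E else 1))
      ≤ Real.exp ((C.card : ℝ) * (q * (E - 1))) := by
    rw [show (∏ e : EdgeIdx n, (if e ∈ C then 1 - q + q * E else 1))
        = ∏ e ∈ Finset.univ ∩ C, (1 - q + q * E) by rw [← Finset.prod_ite_mem],
      Finset.univ_inter, Finset.prod_const]
    have h1 : 1 - q + q * E ≤ Real.exp (q * (E - 1)) := by
      have := Real.add_one_le_exp (q * (E - 1))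
      nlinarith
    calc (1 - q + q * E) ^ C.card ≤ (Real.exp (q * (E - 1))) ^ C.card := by
          apply pow_le_pow_left₀ (by nlinarith) h1
      _ = Real.exp ((C.card : ℝ) * (q * (E - 1))) := by
          rw [← Real.exp_nat_mul]
  calc ∑ G ∈ Finset.univ.filter P, w n q G
      ≤ ∑ G : EdgeIdx n → Bool, w n q G * Real.exp (s * (σ * cR G - a)) := step1
    _ = Real.exp (-(s * a)) * ∑ G : EdgeIdx n → Bool, w n q G * Real.exp ((σ * s) * cR G) := by
        rw [Finset.mul_sum]; exact Finset.sum_congr rfl fun G _ => step2 G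
    _ = Real.exp (-(s * a)) * ∏ e : EdgeIdx n, (if e ∈ C then 1 - q + q * E else 1) := by
        rw [Finset.sum_congr rfl fun G _ => step3 G, step4]
    _ ≤ _ := by
        apply mul_le_mul_of_nonneg_left step5 (Real.exp_pos _).le

end S11c

namespace S11d
open S11 S11b S11c
variable {n : ℕ}

lemma card_cross_le (S : Finset (Fin n)) :
    ((cross n S).card : ℝ) ≤ (n : ℝ) ^ 2 / 4 := by
  rw [card_cross]
  have hk : S.card ≤ n := le_trans (Finset.card_le_univ S) (by simp)
  have : ((S.card * (n - S.card) : ℕ) : ℝ) = (S.card : ℝ) * ((n : ℝ) - S.card) := by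
    push_cast [Nat.cast_sub hk]; ring
  rw [this]
  have hkR : (S.card : ℝ) ≤ (n : ℝ) := by exact_mod_cast hk
  nlinarith [sq_nonneg ((n : ℝ) - 2 * S.card)]

lemma bad_S (q η : ℝ) (hq0 : 0 ≤ q) (hq1 : q ≤ 1) (hη0 : 0 < η) (hη1 : η ≤ 1)
    (S : Finset (Fin n)) :
    ∑ G ∈ Finset.univ.filter (fun G : EdgeIdx n → Bool =>
        η * (n : ℝ) ^ 2 * q / 4 ≤ |cutR n S G - ((cross n S).card : ℝ) * q|),
      w n q G
      ≤ 2 * Real.exp (-(η ^ 2 * (n : ℝ) ^ 2 * q / 16)) := by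
  classical
  set C := cross n S with hC
  set m : ℝ := ((C.card : ℕ) : ℝ) with hm
  set t : ℝ := η * (n : ℝ) ^ 2 * q / 4 with ht
  set s : ℝ := η / 2 with hs
  have hs0 : 0 ≤ s := by positivity
  have hs1 : s ≤ 1 := by rw [hs]; linarith
  have hm0 : 0 ≤ m := Nat.cast_nonneg _
  have hmle : m ≤ (n : ℝ) ^ 2 / 4 := card_cross_le S
  have ht0 : 0 ≤ t := by positivity
  -- the two tails
  have key : ∀ σ a : ℝ, σ = 1 ∨ σ = -1 → -(s * a) + m * (q * (Real.exp (σ * s) - 1))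
      ≤ m * q * s ^ 2 - s * (a - σ * m * q) := by
    intro σ a hσ
    have habs : |σ * s| ≤ 1 := by
      rcases hσ with h | h <;> rw [h] <;>
        simp [abs_mul, abs_of_nonneg hs0] <;> linarith [abs_of_nonneg hs0]
    have hquad := exp_quad habs
    have hσs : (σ * s) ^ 2 = s ^ 2 := by rcases hσ with h | h <;> rw [h] <;> ring
    rw [hσs] at hquad
    have : Real.exp (σ * s) - 1 ≤ σ * s + s ^ 2 := by linarith
    nlinarith [mul_le_mul_of_nonneg_left this (mul_nonneg hm0 hq0)]
  have expbound : m * q * s ^ 2 - s * t ≤ -(η ^ 2 * (n : ℝ) ^ 2 * q / 16) := by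
    have h1 : m * q * s ^ 2 ≤ ((n:ℝ)^2/4) * q * s ^ 2 := by
      apply mul_le_mul_of_nonneg_right (mul_le_mul_of_nonneg_right hmle hq0) (sq_nonneg s)
    have : ((n:ℝ)^2/4) * q * s ^ 2 - s * t = -(η ^ 2 * (n : ℝ) ^ 2 * q / 16) := by
      rw [hs, ht]; ring
    linarith
  have tail1 : ∑ G ∈ Finset.univ.filter (fun G : EdgeIdx n → Bool =>
        m * q + t ≤ cutR n S G), w n q G ≤ Real.exp (-(η ^ 2 * (n : ℝ) ^ 2 * q / 16)) := by
    have := tail_bound (n := n) q s (m * q + t) 1 hq0 hq1 hs0 C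
      (fun G => m * q + t ≤ cutR n S G)
      (fun G hG => by rw [one_mul]; exact hG)
    rw [← Real.exp_add] at this
    refine le_trans this (Real.exp_le_exp.mpr ?_)
    calc -(s * (m * q + t)) + m * (q * (Real.exp (1 * s) - 1))
        ≤ m * q * s ^ 2 - s * ((m * q + t) - 1 * m * q) := key 1 (m * q + t) (Or.inl rfl)
      _ ≤ m * q * s ^ 2 - s * t := le_of_eq (by ring)
      _ ≤ _ := expbound
  have tail2 : ∑ G ∈ Finset.univ.filter (fun G : EdgeIdx n → Bool =>
        cutR n S G ≤ m * q - t), w n q G ≤ Real.exp (-(η ^ 2 * (n : ℝ) ^ 2 * q / 16)) := by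
    have := tail_bound (n := n) q s (t - m * q) (-1) hq0 hq1 hs0 C
      (fun G => cutR n S G ≤ m * q - t)
      (fun G hG => by
        rw [neg_one_mul]
        have hrfl : cutR n S G = ∑ e ∈ C, (if G e then (1:ℝ) else 0) := rfl
        rw [← hrfl]; linarith)
    rw [← Real.exp_add] at this
    refine le_trans this (Real.exp_le_exp.mpr ?_)
    calc -(s * (t - m * q)) + m * (q * (Real.exp (-1 * s) - 1))
        ≤ m * q * s ^ 2 - s * ((t - m * q) - (-1) * m * q) := key (-1) (t - m * q) (Or.inr rfl)
      _ ≤ m * q * s ^ 2 - s * t := le_of_eq (by ring)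
      _ ≤ _ := expbound
  -- combine
  have hsplit : (Finset.univ.filter (fun G : EdgeIdx n → Bool =>
        t ≤ |cutR n S G - m * q|))
      ⊆ (Finset.univ.filter fun G : EdgeIdx n → Bool => m * q + t ≤ cutR n S G)
        ∪ (Finset.univ.filter fun G : EdgeIdx n → Bool => cutR n S G ≤ m * q - t) := by
    intro G hG
    simp only [Finset.mem_filter, Finset.mem_univ, true_and, Finset.mem_union] at hG ⊢
    rcases le_or_gt (m * q + t) (cutR n S G) with h | h
    · exact Or.inl h
    · right
      rcases abs_cases (cutR n S G - m * q) with ⟨heq, hsign⟩ | ⟨heq, hsign⟩ <;>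
        rw [heq] at hG <;> linarith
  calc ∑ G ∈ Finset.univ.filter (fun G : EdgeIdx n → Bool =>
        t ≤ |cutR n S G - m * q|), w n q G
      ≤ ∑ G ∈ ((Finset.univ.filter fun G : EdgeIdx n → Bool => m * q + t ≤ cutR n S G)
        ∪ (Finset.univ.filter fun G : EdgeIdx n → Bool => cutR n S G ≤ m * q - t)), w n q G := by
        exact Finset.sum_le_sum_of_subset_of_nonneg hsplit fun G _ _ => w_nonneg hq0 hq1 G
    _ ≤ _ := by
        have hui := Finset.sum_union_inter (s₁ := Finset.univ.filter
            (fun G : EdgeIdx n → Bool => m * q + t ≤ cutR n S G))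
          (s₂ := Finset.univ.filter fun G : EdgeIdx n → Bool => cutR n S G ≤ m * q - t)
          (f := w n q)
        have hint : 0 ≤ ∑ G ∈ ((Finset.univ.filter fun G : EdgeIdx n → Bool =>
              m * q + t ≤ cutR n S G)
            ∩ (Finset.univ.filter fun G : EdgeIdx n → Bool => cutR n S G ≤ m * q - t)),
            w n q G :=
          Finset.sum_nonneg fun G _ => w_nonneg hq0 hq1 G
        linarith
    
end S11d

namespace S11e
open S11 S11b S11c S11d
variable {n : ℕ}

lemma card_Lset (φ : Fin n ≃ Fin n) {i : ℕ} (hi : i ≤ n) : (Lset n φ i).card = i := by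
  classical
  have : (Lset n φ i).card = (Finset.range i).card := by
    apply Finset.card_nbij (fun u => ((φ u : ℕ)))
    · intro u hu
      simp only [Lset, Finset.mem_coe, Finset.mem_filter] at hu
      simpa using hu.2
    · intro u hu v hv h
      exact φ.injective (Fin.val_injective h)
    · intro a ha
      simp only [Finset.coe_range, Set.mem_Iio] at ha
      refine ⟨φ.symm ⟨a, lt_of_lt_of_le ha hi⟩, ?_, by simp⟩
      simp [Lset, ha]
  rw [this, Finset.card_range]

lemma good_gap (q δ : ℝ) (hq0 : 0 < q) (hq1 : q ≤ 1) (hδ0 : 0 < δ) (hδ1 : δ ≤ 1)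
    (hn2 : 2 ≤ n) (hn : (4:ℝ) ≤ δ * (n:ℝ) ^ 2) (G : EdgeIdx n → Bool)
    (hG : ∀ S : Finset (Fin n),
      |cutR n S G - ((cross n S).card : ℝ) * q| < (δ/8) * (n:ℝ) ^ 2 * q / 4) :
    ((⨆ φ : Fin n ≃ Fin n, CW n G φ : ℕ) : ℝ)
      < (1 + δ) * ((⨅ φ : Fin n ≃ Fin n, CW n G φ : ℕ) : ℝ) := by
  classical
  haveI : Nonempty (Fin n ≃ Fin n) := ⟨Equiv.refl _⟩
  set η : ℝ := δ / 8 with hη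
  set t : ℝ := η * (n:ℝ) ^ 2 * q / 4 with htdef
  obtain ⟨φM, hφM⟩ := Finite.exists_max (fun φ : Fin n ≃ Fin n => CW n G φ)
  obtain ⟨φm, hφm⟩ := Finite.exists_min (fun φ : Fin n ≃ Fin n => CW n G φ)
  have hsup : ((⨆ φ : Fin n ≃ Fin n, CW n G φ : ℕ) : ℝ) ≤ (CW n G φM : ℝ) :=
    Nat.cast_le.mpr (ciSup_le hφM)
  have hinf : (CW n G φm : ℝ) ≤ ((⨅ φ : Fin n ≃ Fin n, CW n G φ : ℕ) : ℝ) :=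
    Nat.cast_le.mpr (le_ciInf hφm)
  -- upper bound on CW φM
  have hub : (CW n G φM : ℝ) < (n:ℝ) ^ 2 * q / 4 + t := by
    have hne : (Finset.Icc 1 n).Nonempty := ⟨1, by simp; omega⟩
    obtain ⟨i, hi, hieq⟩ := Finset.exists_mem_eq_sup (Finset.Icc 1 n) hne (theta n G φM)
    rw [CW, hieq]
    have hS := hG (Lset n φM i)
    have hmle := card_cross_le (Lset n φM i)
    have h1 : (theta n G φM i : ℝ) = cutR n (Lset n φM i) G := cut_eq _ _
    have habs := (abs_lt.mp hS).2
    have hmq : ((cross n (Lset n φM i)).card : ℝ) * q ≤ (n:ℝ) ^ 2 * q / 4 := by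
      nlinarith
    rw [h1]
    linarith
  -- lower bound on CW φm
  have hlb : ((n:ℝ) ^ 2 - 1) * q / 4 - t < (CW n G φm : ℝ) := by
    set h : ℕ := n / 2 with hh
    have hhn : h ≤ n := by omega
    have hmem : h ∈ Finset.Icc 1 n := by simp [hh]; omega
    have hle : theta n G φm h ≤ CW n G φm := Finset.le_sup hmem
    have hcard : (Lset n φm h).card = h := card_Lset φm hhn
    have hcr : ((cross n (Lset n φm h)).card : ℝ) = (h:ℝ) * ((n:ℝ) - h) := by
      rw [card_cross, hcard]
      push_cast [Nat.cast_sub hhn]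
      ring
    have hb1 : n ≤ 2 * h + 1 := by omega
    have hb2 : 2 * h ≤ n := by omega
    have hbounds : (n:ℝ) ≤ 2 * (h:ℝ) + 1 ∧ 2 * (h:ℝ) ≤ (n:ℝ) :=
      ⟨by exact_mod_cast hb1, by exact_mod_cast hb2⟩
    have hmh : ((n:ℝ) ^ 2 - 1) / 4 ≤ (h:ℝ) * ((n:ℝ) - h) := by
      nlinarith [hbounds.1, hbounds.2]
    have hS := hG (Lset n φm h)
    have h1 : (theta n G φm h : ℝ) = cutR n (Lset n φm h) G := cut_eq _ _
    have habs := (abs_lt.mp hS).1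
    have : ((cross n (Lset n φm h)).card : ℝ) * q - t < (theta n G φm h : ℝ) := by
      rw [h1]; linarith
    have hmhq : ((n:ℝ) ^ 2 - 1) * q / 4 ≤ ((cross n (Lset n φm h)).card : ℝ) * q := by
      rw [hcr]; nlinarith
    have hcast : (theta n G φm h : ℝ) ≤ (CW n G φm : ℝ) := Nat.cast_le.mpr hle
    linarith
  -- numeric comparison
  have hnum : (n:ℝ) ^ 2 * q / 4 + t ≤ (1 + δ) * (((n:ℝ) ^ 2 - 1) * q / 4 - t) := by
    rw [htdef, hη]
    have hn1 : (1:ℝ) ≤ (n:ℝ) := by exact_mod_cast (by omega : 1 ≤ n)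
    nlinarith [sq_nonneg ((n:ℝ)), mul_pos hδ0 (mul_pos (by nlinarith : (0:ℝ) < (n:ℝ)^2) hq0)]
  calc ((⨆ φ : Fin n ≃ Fin n, CW n G φ : ℕ) : ℝ) ≤ (CW n G φM : ℝ) := hsup
    _ < (n:ℝ) ^ 2 * q / 4 + t := hub
    _ ≤ (1 + δ) * (((n:ℝ) ^ 2 - 1) * q / 4 - t) := hnum
    _ < (1 + δ) * (CW n G φm : ℝ) := by
        apply mul_lt_mul_of_pos_left hlb (by linarith)
    _ ≤ (1 + δ) * ((⨅ φ : Fin n ≃ Fin n, CW n G φ : ℕ) : ℝ) := by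
        apply mul_le_mul_of_nonneg_left hinf (by linarith)

end S11e

end Aux

open S11 S11b S11c S11d S11e Finset in
/-- Gap theorem for cutwidth: under `G(n, p_n)` with `p_n = Ω(n^{-c})`,
`0 ≤ c < 1/2`, w.h.p. `MAXCW(G_n) < (1 + δ) MINCW(G_n)`. -/
theorem stmt_11 (c : ℝ) (hc0 : 0 ≤ c) (hc : c < 1 / 2)
    (p : ℕ → ℝ≥0∞) (hp1 : ∀ n, p n ≤ 1)
    (hΩ : ∃ K : ℝ, 0 < K ∧ ∀ᶠ n : ℕ in atTop, K * (n : ℝ) ^ (-c) ≤ (p n).toReal) :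
    ∀ ε : ℝ, 0 < ε → ∀ δ : ℝ, 0 < δ → ∃ N : ℕ, ∀ n ≥ N,
      ENNReal.ofReal (1 - ε) <
        erMeasure n (p n) (hp1 n)
          {G | ((⨆ φ : Fin n ≃ Fin n, CW n G φ : ℕ) : ℝ)
            < (1 + δ) * ((⨅ φ : Fin n ≃ Fin n, CW n G φ : ℕ) : ℝ)} := by
  classical
  intro ε hε δ hδ
  obtain ⟨K, hK, hev⟩ := hΩ
  obtain ⟨N₁, hN₁⟩ := eventually_atTop.mp hev
  set δ₀ : ℝ := min δ 1 with hδ₀def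
  have hδ₀0 : 0 < δ₀ := lt_min hδ one_pos
  have hδ₀1 : δ₀ ≤ 1 := min_le_right _ _
  have hδ₀δ : δ₀ ≤ δ := min_le_left _ _
  set ε₀ : ℝ := min ε 1 / 2 with hε₀def
  have hε₀0 : 0 < ε₀ := by positivity
  have hε₀half : ε₀ ≤ 1 / 2 := by
    rw [hε₀def]; have := min_le_right ε 1; linarith
  set η : ℝ := δ₀ / 8 with hηdef
  have hη0 : 0 < η := by positivity
  have hη1 : η ≤ 1 := by rw [hηdef]; linarith
  set β : ℝ := η ^ 2 / 16 with hβdef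
  have hβ0 : 0 < β := by positivity
  refine ⟨max (max 2 ⌈4 / δ₀⌉₊) (max N₁ (max ⌈(3 / (β * K)) ^ 2⌉₊ ⌈1 / ε₀⌉₊)), fun n hn => ?_⟩
  have hn2 : 2 ≤ n := le_trans (le_max_left _ _) (le_trans (le_max_left _ _) hn)
  have hnδ : (4 / δ₀ : ℝ) ≤ n :=
    Nat.ceil_le.mp (le_trans (le_max_right _ _) (le_trans (le_max_left _ _) hn))
  have hnN₁ : N₁ ≤ n := le_trans (le_max_left _ _) (le_trans (le_max_right _ _) hn)
  have hnβ : ((3 / (β * K)) ^ 2 : ℝ) ≤ n :=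
    Nat.ceil_le.mp (le_trans (le_max_left _ _)
      (le_trans (le_max_right _ _) (le_trans (le_max_right _ _) hn)))
  have hnε : (1 / ε₀ : ℝ) ≤ n :=
    Nat.ceil_le.mp (le_trans (le_max_right _ _)
      (le_trans (le_max_right _ _) (le_trans (le_max_right _ _) hn)))
  have hn0R : (0:ℝ) < n := by exact_mod_cast (by omega : 0 < n)
  have hn1R : (1:ℝ) ≤ n := by exact_mod_cast (by omega : 1 ≤ n)
  set q : ℝ := (p n).toReal with hqdef
  have hqK : K * (n : ℝ) ^ (-c) ≤ q := hN₁ n hnN₁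
  have hq0 : 0 < q := lt_of_lt_of_le (by positivity) hqK
  have hq1 : q ≤ 1 := by
    rw [hqdef, show (1:ℝ) = (1:ℝ≥0∞).toReal by simp]
    exact ENNReal.toReal_mono (by norm_num) (hp1 n)
  haveI : IsProbabilityMeasure (erMeasure n (p n) (hp1 n)) := by
    unfold erMeasure; infer_instance
  -- the bad event
  set BadS : Finset (Fin n) → Set (EdgeIdx n → Bool) := fun S =>
    {G | η * (n : ℝ) ^ 2 * q / 4 ≤ |cutR n S G - ((cross n S).card : ℝ) * q|} with hBadSdef
  set Bad : Set (EdgeIdx n → Bool) := ⋃ S, BadS S with hBaddef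
  -- measure of each bad piece
  have hBadS : ∀ S, erMeasure n (p n) (hp1 n) (BadS S)
      ≤ ENNReal.ofReal (2 * Real.exp (-(η ^ 2 * (n : ℝ) ^ 2 * q / 16))) := by
    intro S
    rw [erMeasure_apply, ← hqdef]
    apply ENNReal.ofReal_le_ofReal
    have hset : (BadS S).toFinite.toFinset
        = Finset.univ.filter (fun G : EdgeIdx n → Bool =>
          η * (n : ℝ) ^ 2 * q / 4 ≤ |cutR n S G - ((cross n S).card : ℝ) * q|) := by
      ext G
      simp [Set.Finite.mem_toFinset, hBadSdef]
    rw [hset]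
    exact bad_S q η hq0.le hq1 hη0 hη1 S
  -- total bad measure
  have hBad : erMeasure n (p n) (hp1 n) Bad
      ≤ ENNReal.ofReal ((2:ℝ) ^ n * (2 * Real.exp (-(η ^ 2 * (n : ℝ) ^ 2 * q / 16)))) := by
    calc erMeasure n (p n) (hp1 n) Bad
        ≤ ∑' S : Finset (Fin n), erMeasure n (p n) (hp1 n) (BadS S) :=
          measure_iUnion_le _
      _ = ∑ S : Finset (Fin n), erMeasure n (p n) (hp1 n) (BadS S) := tsum_fintype _
      _ ≤ ∑ S : Finset (Fin n),
            ENNReal.ofReal (2 * Real.exp (-(η ^ 2 * (n : ℝ) ^ 2 * q / 16))) :=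
          Finset.sum_le_sum fun S _ => hBadS S
      _ = _ := by
          rw [Finset.sum_const, Finset.card_univ, Fintype.card_finset, Fintype.card_fin,
            nsmul_eq_mul, ← ENNReal.ofReal_natCast (2^n),
            ← ENNReal.ofReal_mul (by positivity)]
          congr 1
          push_cast
          ring
  -- numeric smallness of the bad probability
  have hsmall : (2:ℝ) ^ n * (2 * Real.exp (-(η ^ 2 * (n : ℝ) ^ 2 * q / 16))) ≤ ε₀ := by
    have hsqrt : 3 / (β * K) ≤ Real.sqrt n := by
      rw [show (3 / (β * K) : ℝ) = Real.sqrt ((3 / (β * K)) ^ 2) from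
        (Real.sqrt_sq (by positivity)).symm]
      exact Real.sqrt_le_sqrt hnβ
    have hsq0 : (0:ℝ) ≤ Real.sqrt n := Real.sqrt_nonneg _
    -- n^2 q ≥ K n^{2-c} ≥ K n^{3/2} = K n √n
    have h1 : K * ((n:ℝ) ^ (2 - c)) ≤ (n:ℝ) ^ 2 * q := by
      have e1 : (n:ℝ) ^ (2 - c) = (n:ℝ) ^ (2:ℝ) * (n:ℝ) ^ (-c) := by
        rw [← Real.rpow_add hn0R]; ring_nf
      have e2 : (n:ℝ) ^ (2:ℝ) = (n:ℝ) ^ 2 := by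
        rw [show (2:ℝ) = ((2:ℕ):ℝ) by norm_num, Real.rpow_natCast]
      calc K * ((n:ℝ) ^ (2 - c)) = (n:ℝ) ^ 2 * (K * (n:ℝ) ^ (-c)) := by
            rw [e1, e2]; ring
        _ ≤ (n:ℝ) ^ 2 * q := by
            apply mul_le_mul_of_nonneg_left hqK (by positivity)
    have h2 : (n:ℝ) * Real.sqrt n ≤ (n:ℝ) ^ (2 - c) := by
      have e3 : (n:ℝ) ^ ((3:ℝ)/2) = (n:ℝ) * Real.sqrt n := by
        rw [show ((3:ℝ)/2) = 1 + 1/2 by norm_num, Real.rpow_add hn0R,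
          Real.rpow_one, ← Real.sqrt_eq_rpow]
      rw [← e3]
      exact Real.rpow_le_rpow_of_exponent_le hn1R (by linarith)
    have h3 : β * (K * ((n:ℝ) * Real.sqrt n)) ≤ η ^ 2 * (n : ℝ) ^ 2 * q / 16 := by
      have : β * (K * ((n:ℝ) * Real.sqrt n)) ≤ β * ((n:ℝ) ^ 2 * q) := by
        apply mul_le_mul_of_nonneg_left (le_trans (by nlinarith) h1) hβ0.le
      calc β * (K * ((n:ℝ) * Real.sqrt n)) ≤ β * ((n:ℝ) ^ 2 * q) := this
        _ = η ^ 2 * (n : ℝ) ^ 2 * q / 16 := by rw [hβdef]; ring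
    have h4 : 3 * (n:ℝ) ≤ β * (K * ((n:ℝ) * Real.sqrt n)) := by
      have := mul_le_mul_of_nonneg_left hsqrt (le_of_lt (mul_pos hβ0 hK))
      rw [mul_div_cancel₀ _ (by positivity : (β * K : ℝ) ≠ 0)] at this
      calc 3 * (n:ℝ) = ((3:ℝ)) * n := by ring
        _ ≤ (β * K * Real.sqrt n) * n := by
            apply mul_le_mul_of_nonneg_right this hn0R.le
        _ = β * (K * ((n:ℝ) * Real.sqrt n)) := by ring
    -- 2^n * 2 ≤ exp (2n)
    have h5 : (2:ℝ) ^ n * 2 ≤ Real.exp (2 * n) := by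
      have hb : (2:ℝ) ≤ Real.exp 1 := by
        have := Real.add_one_le_exp 1; linarith
      calc (2:ℝ) ^ n * 2 = 2 ^ (n + 1) := by ring
        _ ≤ (Real.exp 1) ^ (n + 1) := by
            apply pow_le_pow_left₀ (by norm_num) hb
        _ = Real.exp ((n + 1 : ℕ)) := by rw [← Real.exp_nat_mul]; norm_num
        _ ≤ Real.exp (2 * n) := by
            apply Real.exp_le_exp.mpr; push_cast; nlinarith
    have h6 : Real.exp (-(η ^ 2 * (n : ℝ) ^ 2 * q / 16)) ≤ Real.exp (-(3 * (n:ℝ))) :=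
      Real.exp_le_exp.mpr (by linarith)
    have h7 : Real.exp (-(n:ℝ)) ≤ ε₀ := by
      have h8 : (n:ℝ) + 1 ≤ Real.exp n := Real.add_one_le_exp n
      have h9 : Real.exp (-(n:ℝ)) = 1 / Real.exp n := by
        rw [Real.exp_neg]; ring
      rw [h9]
      calc (1:ℝ) / Real.exp n ≤ 1 / ((n:ℝ) + 1) := by
            apply one_div_le_one_div_of_le (by positivity) h8
        _ ≤ 1 / (n:ℝ) := by
            apply one_div_le_one_div_of_le hn0R (by linarith)
        _ ≤ ε₀ := by
            rw [div_le_iff₀ hn0R]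
            rw [div_le_iff₀ hε₀0] at hnε
            linarith
    calc (2:ℝ) ^ n * (2 * Real.exp (-(η ^ 2 * (n : ℝ) ^ 2 * q / 16)))
        = ((2:ℝ) ^ n * 2) * Real.exp (-(η ^ 2 * (n : ℝ) ^ 2 * q / 16)) := by ring
      _ ≤ Real.exp (2 * n) * Real.exp (-(3 * (n:ℝ))) := by
          apply mul_le_mul h5 h6 (Real.exp_pos _).le (Real.exp_pos _).le
      _ = Real.exp (2 * n - 3 * n) := by rw [← Real.exp_add]; ring_nf
      _ = Real.exp (-(n:ℝ)) := by ring_nf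
      _ ≤ ε₀ := h7
  -- good event is inside the target set
  have hsub : Badᶜ ⊆ {G : EdgeIdx n → Bool |
      ((⨆ φ : Fin n ≃ Fin n, CW n G φ : ℕ) : ℝ)
        < (1 + δ) * ((⨅ φ : Fin n ≃ Fin n, CW n G φ : ℕ) : ℝ)} := by
    intro G hGc
    simp only [hBaddef, Set.compl_iUnion, Set.mem_iInter, Set.mem_compl_iff,
      hBadSdef, Set.mem_setOf_eq, not_le] at hGc
    have hnδ2 : (4:ℝ) ≤ δ₀ * (n:ℝ) ^ 2 := by
      rw [div_le_iff₀ hδ₀0] at hnδ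
      nlinarith
    have hgap := good_gap q δ₀ hq0 hq1 hδ₀0 hδ₀1 hn2 hnδ2 G (fun S => by
      have := hGc S
      rw [hηdef] at this
      exact this)
    have hinf0 : (0:ℝ) ≤ ((⨅ φ : Fin n ≃ Fin n, CW n G φ : ℕ) : ℝ) := Nat.cast_nonneg _
    calc ((⨆ φ : Fin n ≃ Fin n, CW n G φ : ℕ) : ℝ)
        < (1 + δ₀) * ((⨅ φ : Fin n ≃ Fin n, CW n G φ : ℕ) : ℝ) := hgap
      _ ≤ (1 + δ) * ((⨅ φ : Fin n ≃ Fin n, CW n G φ : ℕ) : ℝ) := by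
          apply mul_le_mul_of_nonneg_right (by linarith) hinf0
  -- conclude
  have hcompl : erMeasure n (p n) (hp1 n) Badᶜ
      = 1 - erMeasure n (p n) (hp1 n) Bad := by
    rw [measure_compl (meas_all _) (measure_ne_top _ _), measure_univ]
  have hμBad : erMeasure n (p n) (hp1 n) Bad ≤ ENNReal.ofReal ε₀ :=
    le_trans hBad (ENNReal.ofReal_le_ofReal hsmall)
  have hfinal : ENNReal.ofReal (1 - ε) < erMeasure n (p n) (hp1 n) Badᶜ := by
    rw [hcompl]
    calc ENNReal.ofReal (1 - ε) ≤ ENNReal.ofReal (1 - 2 * ε₀) := by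
          apply ENNReal.ofReal_le_ofReal
          have : 2 * ε₀ ≤ ε := by rw [hε₀def]; have := min_le_left ε 1; linarith
          linarith
      _ < ENNReal.ofReal (1 - ε₀) := by
          rw [ENNReal.ofReal_lt_ofReal_iff (by linarith)]
          linarith
      _ = 1 - ENNReal.ofReal ε₀ := by
          rw [ENNReal.ofReal_sub _ hε₀0.le, ENNReal.ofReal_one]
      _ ≤ 1 - erMeasure n (p n) (hp1 n) Bad := tsub_le_tsub_left hμBad 1
  exact lt_of_lt_of_le hfinal (measure_mono hsub)
end

section
/- Under G(n, p_n) with p_n = Ω(n^{-c}), 0 ≤ c < 1: for all ε, δ > 0 there exists N such that for all n ≥ N, P[MINVS(G_n) ≥ (1-δ)·n - 1] > 1-ε, where MINVS is the minimum over all layouts φ of max_i δ(i,φ,G), with δ(i,φ,G) the number of vertices u with φ(u) ≤ i that have a neighbor v with φ(v) > i. -/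
open MeasureTheory ProbabilityTheory Filter
open scoped ENNReal NNReal

lemma meas_false_cyl (n : ℕ) (p : ℝ≥0∞) (hp : p ≤ 1) (F : Finset (EdgeIdx n)) :
    erMeasure n p hp {G | ∀ e ∈ F, G e = false} ≤ (1 - p) ^ F.card := by
  classical
  have hset : {G : EdgeIdx n → Bool | ∀ e ∈ F, G e = false}
      = Set.pi Set.univ (fun e => if e ∈ F then ({false} : Set Bool) else Set.univ) := by
    ext G
    simp only [Set.mem_setOf_eq, Set.mem_pi, Set.mem_univ, forall_true_left]
    constructor
    · intro h e
      by_cases he : e ∈ F <;> simp [he, h e]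
    · intro h e he
      have := h e
      simp [he] at this
      exact this
  rw [hset, erMeasure, Measure.pi_pi]
  have hfac : ∀ e : EdgeIdx n,
      (PMF.bernoulli p.toNNReal
    (by simpa using ENNReal.toNNReal_mono ENNReal.one_ne_top hp)).toMeasure (if e ∈ F then ({false} : Set Bool) else Set.univ)
        = if e ∈ F then (1 - p) else 1 := by
    intro e
    by_cases he : e ∈ F <;> simp only [he, if_true, if_false]
    · rw [PMF.toMeasure_apply_singleton _ _ (measurableSet_singleton _)]
      simp [PMF.bernoulli, ENNReal.coe_sub, ENNReal.coe_toNNReal (ne_top_of_le_ne_top ENNReal.one_ne_top hp)]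
    · simp
      exact add_tsub_cancel_of_le (PMF.coe_le_one _ _)
  calc ∏ e : EdgeIdx n, (PMF.bernoulli p.toNNReal
    (by simpa using ENNReal.toNNReal_mono ENNReal.one_ne_top hp)).toMeasure
        (if e ∈ F then ({false} : Set Bool) else Set.univ)
      = ∏ e : EdgeIdx n, (if e ∈ F then (1 - p) else 1) := by
        exact Finset.prod_congr rfl fun e _ => hfac e
    _ = (1 - p) ^ F.card := by
        rw [Finset.prod_ite, Finset.prod_const, Finset.prod_const, one_pow, mul_one]
        congr 1
        simp
    _ ≤ (1 - p) ^ F.card := le_rfl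

lemma meas_bad (n : ℕ) (p : ℝ≥0∞) (hp : p ≤ 1) (s : ℕ) (A B : Finset (Fin n))
    (hA : A.card = s) (hB : B.card = s) (hAB : Disjoint A B) :
    erMeasure n p hp {G | ∀ u ∈ A, ∀ v ∈ B, ¬ adj n G u v} ≤ (1 - p) ^ (s * s) := by
  classical
  set F : Finset (EdgeIdx n) :=
    Finset.univ.filter (fun e => ∃ u ∈ A, ∃ v ∈ B, e.1 = {u, v}) with hF
  have hsub : {G : EdgeIdx n → Bool | ∀ u ∈ A, ∀ v ∈ B, ¬ adj n G u v}
      ⊆ {G | ∀ e ∈ F, G e = false} := by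
    intro G hG e he
    simp only [hF, Finset.mem_filter, Finset.mem_univ, true_and] at he
    obtain ⟨u, hu, v, hv, hev⟩ := he
    by_contra hGe
    have hGe' : G e = true := by
      cases h : G e
      · exact absurd h hGe
      · rfl
    have hne : u ≠ v := by
      intro h
      exact (Finset.disjoint_left.mp hAB hu) (h ▸ hv)
    exact hG u hu v hv ⟨hne, e, hGe', hev⟩
  have hcard : s * s ≤ F.card := by
    have himg : ((A ×ˢ B).image (fun uv : Fin n × Fin n => ({uv.1, uv.2} : Finset (Fin n))))
        ⊆ F.image Subtype.val := by
      intro x hx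
      simp only [Finset.mem_image, Finset.mem_product] at hx
      obtain ⟨⟨u, v⟩, ⟨hu, hv⟩, rfl⟩ := hx
      have hne : u ≠ v := fun h => (Finset.disjoint_left.mp hAB hu) (h ▸ hv)
      have hcard2 : ({u, v} : Finset (Fin n)).card = 2 := by
        rw [Finset.card_insert_of_notMem (by simp [hne]), Finset.card_singleton]
      refine Finset.mem_image.mpr ⟨⟨{u, v}, hcard2⟩, ?_, rfl⟩
      simp only [hF, Finset.mem_filter, Finset.mem_univ, true_and]
      exact ⟨u, hu, v, hv, rfl⟩
    have hinj : Set.InjOn (fun uv : Fin n × Fin n => ({uv.1, uv.2} : Finset (Fin n)))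
        ↑(A ×ˢ B) := by
      rintro ⟨u, v⟩ huv ⟨u', v'⟩ huv' h
      simp only [Finset.mem_coe, Finset.mem_product] at huv huv'
      simp only at h
      have hu : u ∈ ({u', v'} : Finset (Fin n)) := h ▸ (by simp : u ∈ ({u, v} : Finset (Fin n)))
      have hv : v ∈ ({u', v'} : Finset (Fin n)) := h ▸ (by simp : v ∈ ({u, v} : Finset (Fin n)))
      simp only [Finset.mem_insert, Finset.mem_singleton] at hu hv
      have hu' : u = u' := by
        rcases hu with h1 | h1
        · exact h1
        · exact absurd (h1 ▸ huv.1) (Finset.disjoint_right.mp hAB huv'.2)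
      have hv' : v = v' := by
        rcases hv with h1 | h1
        · exact absurd (h1 ▸ huv.2) (Finset.disjoint_left.mp hAB huv'.1)
        · exact h1
      simp [hu', hv']
    calc s * s = (A ×ˢ B).card := by rw [Finset.card_product, hA, hB]
      _ = ((A ×ˢ B).image (fun uv : Fin n × Fin n => ({uv.1, uv.2} : Finset (Fin n)))).card :=
          (Finset.card_image_of_injOn hinj).symm
      _ ≤ (F.image Subtype.val).card := Finset.card_le_card himg
      _ ≤ F.card := Finset.card_image_le
  calc erMeasure n p hp {G | ∀ u ∈ A, ∀ v ∈ B, ¬ adj n G u v}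
      ≤ erMeasure n p hp {G | ∀ e ∈ F, G e = false} := measure_mono hsub
    _ ≤ (1 - p) ^ F.card := meas_false_cyl n p hp F
    _ ≤ (1 - p) ^ (s * s) := pow_le_pow_of_le_one zero_le tsub_le_self hcard

def Good (n s : ℕ) (G : EdgeIdx n → Bool) : Prop :=
  ∀ A B : Finset (Fin n), A.card = s → B.card = s → Disjoint A B →
    ∃ u ∈ A, ∃ v ∈ B, adj n G u v

lemma meas_notGood (n : ℕ) (p : ℝ≥0∞) (hp : p ≤ 1) (s : ℕ) :
    erMeasure n p hp {G | ¬ Good n s G}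
      ≤ (2 ^ n * 2 ^ n : ℕ) * (1 - p) ^ (s * s) := by
  classical
  set badSet : Finset (Fin n) × Finset (Fin n) → Set (EdgeIdx n → Bool) :=
    fun AB => {G | AB.1.card = s ∧ AB.2.card = s ∧ Disjoint AB.1 AB.2 ∧
      ∀ u ∈ AB.1, ∀ v ∈ AB.2, ¬ adj n G u v} with hbad
  have hsub : {G | ¬ Good n s G} ⊆ ⋃ AB, badSet AB := by
    intro G hG
    simp only [Set.mem_setOf_eq, Good, not_forall] at hG
    obtain ⟨A, B, hA, hB, hD, hno⟩ := hG
    refine Set.mem_iUnion.mpr ⟨(A, B), ?_⟩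
    refine ⟨hA, hB, hD, fun u hu v hv hadj => ?_⟩
    push_neg at hno
    exact hno u hu v hv hadj
  have hterm : ∀ AB, erMeasure n p hp (badSet AB) ≤ (1 - p) ^ (s * s) := by
    intro ⟨A, B⟩
    by_cases h : A.card = s ∧ B.card = s ∧ Disjoint A B
    · refine le_trans (measure_mono ?_) (meas_bad n p hp s A B h.1 h.2.1 h.2.2)
      intro G hG
      exact hG.2.2.2
    · have h1 : badSet (A, B) = ∅ := by
        ext G
        simp only [hbad, Set.mem_setOf_eq, Set.mem_empty_iff_false, iff_false]
        intro hG
        exact h ⟨hG.1, hG.2.1, hG.2.2.1⟩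
      simp [h1]
  calc erMeasure n p hp {G | ¬ Good n s G}
      ≤ ∑' AB : Finset (Fin n) × Finset (Fin n), erMeasure n p hp (badSet AB) :=
        le_trans (measure_mono hsub) (measure_iUnion_le _)
    _ = ∑ AB : Finset (Fin n) × Finset (Fin n), erMeasure n p hp (badSet AB) := tsum_fintype _
    _ ≤ ∑ _AB : Finset (Fin n) × Finset (Fin n), (1 - p) ^ (s * s) :=
        Finset.sum_le_sum fun AB _ => hterm AB
    _ = (Fintype.card (Finset (Fin n) × Finset (Fin n)) : ℕ) * (1 - p) ^ (s * s) := by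
        rw [Finset.sum_const, Finset.card_univ, nsmul_eq_mul]
    _ = (2 ^ n * 2 ^ n : ℕ) * (1 - p) ^ (s * s) := by
        congr 1
        norm_cast
        simp [Fintype.card_prod, Fintype.card_finset]

lemma card_Lfilter (n i : ℕ) (hi : i < n) (φ : Fin n ≃ Fin n) :
    (Finset.univ.filter fun u : Fin n => (φ u : ℕ) < i).card = i := by
  classical
  have h1 : (Finset.univ.filter fun u : Fin n => (φ u : ℕ) < i).card
      = (Finset.univ.filter fun j : Fin n => (j : ℕ) < i).card := by
    apply Finset.card_bij (fun u _ => φ u)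
    · intro u hu
      simp only [Finset.mem_filter, Finset.mem_univ, true_and] at hu ⊢
      exact hu
    · intro u _ u' _ h
      exact φ.injective h
    · intro j hj
      refine ⟨φ.symm j, ?_, by simp⟩
      simp only [Finset.mem_filter, Finset.mem_univ, true_and, Equiv.apply_symm_apply] at hj ⊢
      exact hj
  have h2 : (Finset.univ.filter fun j : Fin n => (j : ℕ) < i) = Finset.Iio ⟨i, hi⟩ := by
    ext j
    simp [Finset.mem_Iio, Fin.lt_def]
  rw [h1, h2, Fin.card_Iio]

lemma vs_of_good (n s : ℕ) (hs : 1 ≤ s) (hns : 2 * s ≤ n) (G : EdgeIdx n → Bool)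
    (hG : Good n s G) (φ : Fin n ≃ Fin n) : n - 2 * s + 1 ≤ VS n G φ := by
  classical
  set i := n - s with hi
  have hin : i < n := by omega
  have hi1 : 1 ≤ i := by omega
  -- left set
  set L : Finset (Fin n) := Finset.univ.filter fun u => (φ u : ℕ) < i with hL
  have hLcard : L.card = i := card_Lfilter n i hin φ
  -- right set
  set R : Finset (Fin n) := Finset.univ.filter fun v => i ≤ (φ v : ℕ) with hR
  have hRcard : R.card = s := by
    have : R = Finset.univ \ L := by
      ext v
      simp [hR, hL, not_lt]
    rw [this, Finset.card_sdiff_of_subset (Finset.subset_univ L), Finset.card_univ, Fintype.card_fin,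
      hLcard]
    omega
  -- bad vertices on the left
  set A0 : Finset (Fin n) := L.filter (fun u => ¬ ∃ v, i ≤ (φ v : ℕ) ∧ adj n G u v) with hA0
  have hA0card : A0.card < s := by
    by_contra hcon
    push_neg at hcon
    obtain ⟨A, hAsub, hAcard⟩ := Finset.exists_subset_card_eq hcon
    have hdisj : Disjoint A R := by
      rw [Finset.disjoint_left]
      intro u huA huR
      have huL : u ∈ L := Finset.filter_subset _ _ (hAsub huA)
      simp only [hL, Finset.mem_filter, Finset.mem_univ, true_and] at huL
      simp only [hR, Finset.mem_filter, Finset.mem_univ, true_and] at huR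
      omega
    obtain ⟨u, hu, v, hv, hadj⟩ := hG A R hAcard hRcard hdisj
    have := hAsub hu
    simp only [hA0, Finset.mem_filter] at this
    apply this.2
    refine ⟨v, ?_, hadj⟩
    simp only [hR, Finset.mem_filter, Finset.mem_univ, true_and] at hv
    exact hv
  -- vsep at i
  have hvsep : vsep n G φ i + A0.card = i := by
    have hv : vsep n G φ i = (L.filter (fun u => ∃ v, i ≤ (φ v : ℕ) ∧ adj n G u v)).card := by
      unfold vsep
      congr 1
      ext u
      simp only [hL, Finset.mem_filter, Finset.mem_univ, true_and, and_assoc]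
    rw [hv, hA0, Finset.card_filter_add_card_filter_not, hLcard]
  have hVS : vsep n G φ i ≤ VS n G φ := by
    apply Finset.le_sup
    simp only [Finset.mem_Icc]
    omega
  omega

lemma tends_aux (C : ℝ) (hC : 0 < C) (c : ℝ) (hc : c < 1) :
    Tendsto (fun n : ℕ => (4:ℝ)^n * Real.exp (-(C * (n:ℝ)^((2:ℝ)-c)))) atTop (nhds 0) := by
  have heq : (fun n : ℕ => (4:ℝ)^n * Real.exp (-(C * (n:ℝ)^((2:ℝ)-c))))
      = fun n : ℕ => Real.exp ((n:ℝ) * Real.log 4 - C * (n:ℝ)^((2:ℝ)-c)) := by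
    funext n
    have h4 : (4:ℝ)^n = Real.exp ((n:ℝ) * Real.log 4) := by
      rw [Real.exp_nat_mul, Real.exp_log] <;> norm_num
    rw [h4, ← Real.exp_add]
    ring_nf
  rw [heq]
  apply Real.tendsto_exp_atBot.comp
  have hexp : Tendsto (fun x : ℝ => x * (Real.log 4 - C * x ^ ((1:ℝ)-c))) atTop atBot := by
    apply Filter.Tendsto.atTop_mul_atBot₀ tendsto_id
    have h1 : Tendsto (fun x : ℝ => C * x ^ ((1:ℝ)-c)) atTop atTop :=
      (tendsto_rpow_atTop (by linarith)).const_mul_atTop hC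
    have := tendsto_atBot_add_const_left atTop (Real.log 4) (tendsto_neg_atBot_iff.mpr h1)
    simpa [sub_eq_add_neg] using this
  have hcomp : Tendsto (fun n : ℕ => (n:ℝ) * (Real.log 4 - C * (n:ℝ) ^ ((1:ℝ)-c)))
      atTop atBot := hexp.comp tendsto_natCast_atTop_atTop
  apply hcomp.congr'
  filter_upwards [eventually_ge_atTop 1] with n hn
  have hn0 : (0:ℝ) < n := by exact_mod_cast hn
  have : (n:ℝ) ^ ((2:ℝ)-c) = (n:ℝ) * (n:ℝ) ^ ((1:ℝ)-c) := by
    rw [show (2:ℝ)-c = 1 + (1-c) by ring, Real.rpow_add hn0, Real.rpow_one]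
  rw [this]
  ring

lemma meas_notGood_real (n : ℕ) (p : ℝ≥0∞) (hp : p ≤ 1) (s : ℕ) :
    erMeasure n p hp {G | ¬ Good n s G}
      ≤ ENNReal.ofReal ((4:ℝ)^n * Real.exp (-(p.toReal * s * s))) := by
  set q : ℝ := p.toReal with hq
  have hq0 : 0 ≤ q := ENNReal.toReal_nonneg
  have hq1 : q ≤ 1 := by
    have := ENNReal.toReal_mono (by norm_num) hp
    simpa using this
  have h1p : (1 : ℝ≥0∞) - p = ENNReal.ofReal (1 - q) := by
    have hne : (1 : ℝ≥0∞) - p ≠ ∞ := ne_top_of_le_ne_top ENNReal.one_ne_top tsub_le_self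
    rw [← ENNReal.ofReal_toReal hne, ENNReal.toReal_sub_of_le hp ENNReal.one_ne_top]
    simp [hq]
  refine le_trans (meas_notGood n p hp s) ?_
  rw [h1p, ← ENNReal.ofReal_pow (by linarith), ← ENNReal.ofReal_natCast,
    ← ENNReal.ofReal_mul (by positivity)]
  apply ENNReal.ofReal_le_ofReal
  have hcast : ((2 ^ n * 2 ^ n : ℕ) : ℝ) = (4:ℝ)^n := by
    push_cast
    rw [← mul_pow]
    norm_num
  rw [hcast]
  apply mul_le_mul_of_nonneg_left _ (by positivity)
  calc (1 - q) ^ (s * s) ≤ Real.exp (-q) ^ (s * s) := by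
        apply pow_le_pow_left₀ (by linarith)
        linarith [Real.add_one_le_exp (-q)]
    _ = Real.exp (-(q * s * s)) := by
        rw [← Real.exp_nat_mul]
        congr 1
        push_cast
        ring

/-- High-probability lower bound for minimum vertex separation: under
`G(n, p_n)` with `p_n = Ω(n^{-c})`, `0 ≤ c < 1`, w.h.p.
`MINVS(G_n) ≥ (1 - δ) n - 1`. -/
theorem stmt_13 (c : ℝ) (hc0 : 0 ≤ c) (hc : c < 1)
    (p : ℕ → ℝ≥0∞) (hp1 : ∀ n, p n ≤ 1)
    (hΩ : ∃ K : ℝ, 0 < K ∧ ∀ᶠ n : ℕ in atTop, K * (n : ℝ) ^ (-c) ≤ (p n).toReal) :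
    ∀ ε : ℝ, 0 < ε → ∀ δ : ℝ, 0 < δ → ∃ N : ℕ, ∀ n ≥ N,
      ENNReal.ofReal (1 - ε) <
        erMeasure n (p n) (hp1 n)
          {G | (1 - δ) * (n : ℝ) - 1 ≤ ((⨅ φ : Fin n ≃ Fin n, VS n G φ : ℕ) : ℝ)} := by
  intro ε hε δ hδ
  classical
  obtain ⟨K, hK, hKev⟩ := hΩ
  set δ' : ℝ := min δ (1/2) with hδ'def
  have hδ'0 : 0 < δ' := lt_min hδ (by norm_num)
  have hδ'δ : δ' ≤ δ := min_le_left _ _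
  have hδ'h : δ' ≤ 1/2 := min_le_right _ _
  set C : ℝ := K * δ'^2 / 4 with hCdef
  have hC : 0 < C := by positivity
  set η : ℝ := min ε 1 with hηdef
  have hη : 0 < η := lt_min hε one_pos
  have hηε : η ≤ ε := min_le_left _ _
  have hη1 : η ≤ 1 := min_le_right _ _
  have hev1 : ∀ᶠ n : ℕ in atTop, (4:ℝ)^n * Real.exp (-(C * (n:ℝ)^((2:ℝ)-c))) < η :=
    (tends_aux C hC c hc).eventually_lt_const hη
  obtain ⟨N₁, hN₁⟩ := eventually_atTop.mp hev1
  obtain ⟨N₂, hN₂⟩ := eventually_atTop.mp hKev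
  refine ⟨max (max N₁ N₂) 4, fun n hn => ?_⟩
  have hn1 : N₁ ≤ n := le_trans (le_max_left _ _) (le_trans (le_max_left _ _) hn)
  have hn2 : N₂ ≤ n := le_trans (le_max_right _ _) (le_trans (le_max_left _ _) hn)
  have hn4 : 4 ≤ n := le_trans (le_max_right _ _) hn
  have hn4R : (4:ℝ) ≤ (n:ℝ) := by exact_mod_cast hn4
  have hn0 : (0:ℝ) < (n:ℝ) := by linarith
  set s : ℕ := ⌊δ' * n / 2⌋₊ + 1 with hsdef
  have hs1 : 1 ≤ s := by omega
  have hsreal : δ' * n / 2 ≤ (s:ℝ) := by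
    have h := Nat.lt_floor_add_one (δ' * (n:ℝ) / 2)
    have : ((s:ℕ):ℝ) = (⌊δ' * (n:ℝ) / 2⌋₊ : ℝ) + 1 := by rw [hsdef]; push_cast; ring
    linarith
  have hsup : (s:ℝ) ≤ δ' * n / 2 + 1 := by
    have h := Nat.floor_le (show (0:ℝ) ≤ δ' * (n:ℝ) / 2 by positivity)
    have : ((s:ℕ):ℝ) = (⌊δ' * (n:ℝ) / 2⌋₊ : ℝ) + 1 := by rw [hsdef]; push_cast; ring
    linarith
  have hs2R : 2 * (s:ℝ) ≤ δ' * n + 2 := by linarith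
  have hs2 : 2 * s ≤ n := by
    have hhalf : δ' * n ≤ (n:ℝ) / 2 := by nlinarith
    have h1 : 2 * (s:ℝ) ≤ (n:ℝ) := by linarith
    exact_mod_cast h1
  set μ := erMeasure n (p n) (hp1 n) with hμ
  haveI : IsProbabilityMeasure μ := by
    rw [hμ]; unfold erMeasure; infer_instance
  set E : Set (EdgeIdx n → Bool) :=
    {G | (1 - δ) * (n : ℝ) - 1 ≤ ((⨅ φ : Fin n ≃ Fin n, VS n G φ : ℕ) : ℝ)} with hE
  have hsubev : {G : EdgeIdx n → Bool | Good n s G} ⊆ E := by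
    intro G hGood
    haveI : Nonempty (Fin n ≃ Fin n) := ⟨Equiv.refl _⟩
    have h1 : (n - 2*s + 1 : ℕ) ≤ ⨅ φ : Fin n ≃ Fin n, VS n G φ :=
      le_ciInf (fun φ => vs_of_good n s hs1 hs2 G hGood φ)
    have h2 : ((n - 2*s + 1 : ℕ) : ℝ) = (n:ℝ) - 2*(s:ℝ) + 1 := by
      rw [Nat.cast_add, Nat.cast_sub hs2]
      push_cast
      ring
    show (1 - δ) * (n : ℝ) - 1 ≤ _
    calc (1 - δ) * (n:ℝ) - 1 ≤ (1 - δ') * n - 1 := by nlinarith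
      _ ≤ (n:ℝ) - 2*(s:ℝ) + 1 := by linarith
      _ = ((n - 2*s + 1 : ℕ) : ℝ) := h2.symm
      _ ≤ _ := Nat.cast_le.mpr h1
  have hcompl : Eᶜ ⊆ {G | ¬ Good n s G} := by
    intro G hG hGood
    exact hG (hsubev hGood)
  have hq := hN₂ n hn2
  have hq0 : (0:ℝ) ≤ (p n).toReal := ENNReal.toReal_nonneg
  have hrpow : (n:ℝ)^((2:ℝ)-c) = (n:ℝ)^(-c) * ((n:ℝ) * (n:ℝ)) := by
    rw [show ((2:ℝ)-c) = -c + 2 by ring, Real.rpow_add hn0,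
      show (2:ℝ) = ((2:ℕ):ℝ) by norm_num, Real.rpow_natCast]
    ring
  have hexp : C * (n:ℝ)^((2:ℝ)-c) ≤ (p n).toReal * s * s := by
    have hpos : (0:ℝ) ≤ δ' * n / 2 := by positivity
    have h1 : K * (n:ℝ)^(-c) * (δ'*n/2) ≤ (p n).toReal * s :=
      mul_le_mul hq hsreal hpos hq0
    have h2 : K * (n:ℝ)^(-c) * (δ'*n/2) * (δ'*n/2) ≤ (p n).toReal * s * s :=
      mul_le_mul h1 hsreal hpos (by positivity)
    calc C * (n:ℝ)^((2:ℝ)-c) = K * (n:ℝ)^(-c) * (δ'*n/2) * (δ'*n/2) := by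
          rw [hrpow, hCdef]; ring
      _ ≤ _ := h2
  have hblt : μ Eᶜ < ENNReal.ofReal η := by
    refine lt_of_le_of_lt
      (le_trans (measure_mono hcompl) (meas_notGood_real n (p n) (hp1 n) s)) ?_
    rw [ENNReal.ofReal_lt_ofReal_iff hη]
    calc (4:ℝ)^n * Real.exp (-((p n).toReal * s * s))
        ≤ (4:ℝ)^n * Real.exp (-(C * (n:ℝ)^((2:ℝ)-c))) := by
          apply mul_le_mul_of_nonneg_left _ (by positivity)
          exact Real.exp_le_exp.mpr (by linarith)
      _ < η := hN₁ n hn1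
  have hsum : (1:ℝ≥0∞) ≤ μ E + μ Eᶜ := by
    have h := measure_union_le (μ := μ) E Eᶜ
    rwa [Set.union_compl_self, measure_univ] at h
  have hkey : ENNReal.ofReal (1 - ε) + μ Eᶜ < μ E + μ Eᶜ := by
    calc ENNReal.ofReal (1 - ε) + μ Eᶜ
        < ENNReal.ofReal (1 - η) + ENNReal.ofReal η :=
          ENNReal.add_lt_add_of_le_of_lt ENNReal.ofReal_ne_top
            (ENNReal.ofReal_le_ofReal (by linarith)) hblt
      _ = 1 := by
          rw [← ENNReal.ofReal_add (by linarith) (le_of_lt hη)]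
          norm_num
      _ ≤ μ E + μ Eᶜ := hsum
  exact (ENNReal.add_lt_add_iff_right (measure_ne_top μ Eᶜ)).mp hkey
end

section
/- Under G(n, p_n) with p_n = Ω(n^{-c}), 0 ≤ c < 1: for all ε, δ > 0 there exists N such that for all n ≥ N, P[MAXVS(G_n) < (1+δ)·MINVS(G_n)] > 1-ε, where VS(G,φ) = max_i δ(i,φ,G) and MAXVS, MINVS are its max and min over layouts φ. -/
open MeasureTheory ProbabilityTheory Filter
open scoped ENNReal NNReal

section Helpers

theorem VSaux_card_lt_filter (n i : ℕ) (hi : i ≤ n) :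
    (Finset.univ.filter fun v : Fin n => (v : ℕ) < i).card = i := by
  rw [← Finset.card_image_of_injective _ Fin.val_injective]
  have : Finset.image Fin.val (Finset.univ.filter fun v : Fin n => (v : ℕ) < i)
      = Finset.range i := by
    ext x
    simp only [Finset.mem_image, Finset.mem_filter, Finset.mem_univ, true_and, Finset.mem_range]
    constructor
    · rintro ⟨v, hv, rfl⟩; exact hv
    · intro hx; exact ⟨⟨x, lt_of_lt_of_le hx hi⟩, hx, rfl⟩
  rw [this, Finset.card_range]

theorem VSaux_card_lt_filter_phi (n i : ℕ) (hi : i ≤ n) (φ : Fin n ≃ Fin n) :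
    (Finset.univ.filter fun u : Fin n => ((φ u : Fin n) : ℕ) < i).card = i := by
  have h := Finset.card_equiv φ
    (s := Finset.univ.filter fun u : Fin n => ((φ u : Fin n) : ℕ) < i)
    (t := Finset.univ.filter fun v : Fin n => (v : ℕ) < i) (by intro u; simp)
  rw [h, VSaux_card_lt_filter n i hi]

theorem VSaux_vsep_le_aux (n : ℕ) (G : EdgeIdx n → Bool) (φ : Fin n ≃ Fin n) (i : ℕ) :
    vsep n G φ i ≤ (Finset.univ.filter fun u : Fin n => ((φ u : Fin n) : ℕ) < i).card := by
  unfold vsep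
  apply Finset.card_le_card
  intro x hx
  simp only [Finset.mem_filter] at hx ⊢
  exact ⟨hx.1, hx.2.1⟩

theorem VSaux_vsep_eq_zero (n : ℕ) (G : EdgeIdx n → Bool) (φ : Fin n ≃ Fin n) (i : ℕ)
    (hi : n ≤ i) : vsep n G φ i = 0 := by
  letI := Classical.dec
  unfold vsep
  refine Finset.card_eq_zero.mpr (Finset.filter_eq_empty_iff.mpr ?_)
  rintro u - ⟨-, v, hv, -⟩
  exact absurd (lt_of_le_of_lt hv (φ v).isLt) (not_lt.mpr hi)

theorem VSaux_VS_le (n : ℕ) (G : EdgeIdx n → Bool) (φ : Fin n ≃ Fin n) : VS n G φ ≤ n - 1 := by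
  apply Finset.sup_le
  intro i hi
  simp only [Finset.mem_Icc] at hi
  by_cases hin : i < n
  · calc vsep n G φ i ≤ _ := VSaux_vsep_le_aux n G φ i
      _ = i := VSaux_card_lt_filter_phi n i hin.le φ
      _ ≤ n - 1 := by omega
  · rw [VSaux_vsep_eq_zero n G φ i (by omega)]
    exact Nat.zero_le _

theorem VSaux_VS_lower (n m : ℕ) (hm1 : 1 ≤ m) (hmn : 2 * m ≤ n) (G : EdgeIdx n → Bool)
    (hE : ∀ S T : Finset (Fin n), Disjoint S T → S.card = m → T.card = m →
      ∃ u ∈ S, ∃ v ∈ T, adj n G u v)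
    (φ : Fin n ≃ Fin n) : n - 2 * m + 1 ≤ VS n G φ := by
  set i := n - m with hidef
  have hin : i ≤ n := Nat.sub_le _ _
  refine le_trans ?_ (Finset.le_sup (f := vsep n G φ)
    (by simp only [Finset.mem_Icc]; omega : i ∈ Finset.Icc 1 n))
  set L := (Finset.univ.filter fun u : Fin n => ((φ u : Fin n) : ℕ) < i) with hL
  have hLcard : L.card = i := by rw [hL]; exact VSaux_card_lt_filter_phi n i hin φ
  set T := (Finset.univ.filter fun v : Fin n => i ≤ ((φ v : Fin n) : ℕ)) with hT
  have hTcard : T.card = m := by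
    have hTL : T = Finset.univ \ L := by
      ext x; simp [hT, hL, not_lt]
    rw [hTL, Finset.card_sdiff_of_subset (Finset.subset_univ _), Finset.card_univ, Fintype.card_fin, hLcard]
    omega
  set A := @Finset.filter (Fin n) (fun u : Fin n =>
      ((φ u : Fin n) : ℕ) < i ∧ ¬ ∃ v, i ≤ ((φ v : Fin n) : ℕ) ∧ adj n G u v)
      (fun _ => Classical.dec _) Finset.univ with hA
  have key : L.card ≤ vsep n G φ i + A.card := by
    unfold vsep
    refine le_trans (Finset.card_le_card ?_) (Finset.card_union_le _ _)
    intro x hx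
    simp only [hL, hA, Finset.mem_filter, Finset.mem_union, Finset.mem_univ, true_and] at hx ⊢
    by_cases h : ∃ v, i ≤ ((φ v : Fin n) : ℕ) ∧ adj n G x v
    · exact Or.inl ⟨hx, h⟩
    · exact Or.inr ⟨hx, h⟩
  have hAlt : A.card < m := by
    by_contra h
    push_neg at h
    obtain ⟨S, hSA, hScard⟩ := Finset.exists_subset_card_eq h
    have hdisj : Disjoint S T := by
      refine Finset.disjoint_left.2 fun x hxS hxT => ?_
      have hxA := hSA hxS
      simp only [hA, Finset.mem_filter, Finset.mem_univ, true_and] at hxA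
      simp only [hT, Finset.mem_filter, Finset.mem_univ, true_and] at hxT
      omega
    obtain ⟨u, huS, v, hvT, hadj⟩ := hE S T hdisj hScard hTcard
    have huA := hSA huS
    simp only [hA, Finset.mem_filter, Finset.mem_univ, true_and, not_exists] at huA
    simp only [hT, Finset.mem_filter, Finset.mem_univ, true_and] at hvT
    exact (huA.2 v) ⟨hvT, hadj⟩
  omega

theorem VSaux_prob_all_false (n : ℕ) (p : ℝ≥0∞) (hp : p ≤ 1) (F : Finset (EdgeIdx n)) :
    erMeasure n p hp {G | ∀ e ∈ F, G e = false} = (1-p)^F.card := by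
  classical
  have h : {G : EdgeIdx n → Bool | ∀ e ∈ F, G e = false}
      = Set.pi Set.univ (fun e => if e ∈ F then ({false} : Set Bool) else Set.univ) := by
    ext G
    simp only [Set.mem_pi, Set.mem_univ, Set.mem_setOf_eq, forall_true_left]
    constructor
    · intro h e; split <;> simp_all
    · intro h e he; have := h e; simp [he] at this; exact this
  rw [h, erMeasure, Measure.pi_pi]
  have : ∀ e : EdgeIdx n, (PMF.bernoulli p.toNNReal
      (by simpa using ENNReal.toNNReal_mono ENNReal.one_ne_top hp)).toMeasure
        (if e ∈ F then ({false} : Set Bool) else Set.univ)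
      = if e ∈ F then (1-p) else 1 := by
    intro e
    split
    · rw [PMF.toMeasure_apply_singleton _ _ (measurableSet_singleton _)]
      refine (PMF.bernoulli_apply _ false).trans ?_
      rw [Bool.cond_false, ENNReal.coe_sub, ENNReal.coe_one, ENNReal.coe_toNNReal (ne_top_of_le_ne_top ENNReal.one_ne_top hp)]
    · exact measure_univ
  simp_rw [this]
  rw [Finset.prod_ite_mem, Finset.univ_inter, Finset.prod_const]

theorem VSaux_prob_no_adj_le (n : ℕ) (p : ℝ≥0∞) (hp : p ≤ 1) (m : ℕ) (hm : 1 ≤ m)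
    (S T : Finset (Fin n)) (hd : Disjoint S T) (hS : S.card = m) (hT : T.card = m) :
    erMeasure n p hp {G | ∀ u ∈ S, ∀ v ∈ T, ¬ adj n G u v} ≤ (1-p)^(m*m) := by
  classical
  obtain ⟨u₀, hu₀⟩ := Finset.card_pos.mp (by omega : 0 < S.card)
  obtain ⟨v₀, hv₀⟩ := Finset.card_pos.mp (by omega : 0 < T.card)
  have hne0 : u₀ ≠ v₀ := fun h => (Finset.disjoint_left.mp hd hu₀) (h ▸ hv₀)
  set e₀ : EdgeIdx n := ⟨{u₀, v₀}, Finset.card_pair hne0⟩ with he₀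
  set f : Fin n × Fin n → EdgeIdx n := fun w =>
    if h : w.1 ≠ w.2 then ⟨{w.1, w.2}, Finset.card_pair h⟩ else e₀ with hf
  set F := (S ×ˢ T).image f with hF
  have hne : ∀ {u v : Fin n}, u ∈ S → v ∈ T → u ≠ v := fun hu hv h =>
    (Finset.disjoint_left.mp hd hu) (h ▸ hv)
  have hfval : ∀ {u v : Fin n}, u ∈ S → v ∈ T → (f (u, v)).1 = {u, v} := by
    intro u v hu hv
    simp only [hf]
    rw [dif_pos (hne hu hv)]
  have hFcard : F.card = m * m := by
    rw [hF, Finset.card_image_of_injOn, Finset.card_product, hS, hT]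
    rintro ⟨a, b⟩ hab' ⟨c, d⟩ hcd' hfe
    have hab := Finset.mem_product.mp hab'
    have hcd := Finset.mem_product.mp hcd'
    have h1 : ({a, b} : Finset (Fin n)) = {c, d} := by
      rw [← hfval hab.1 hab.2, ← hfval hcd.1 hcd.2, hfe]
    have hac : a = c := by
      have : a ∈ ({c, d} : Finset (Fin n)) := h1 ▸ Finset.mem_insert_self a {b}
      rcases Finset.mem_insert.mp this with h | h
      · exact h
      · exact absurd (Finset.mem_singleton.mp h) (hne hab.1 hcd.2)
    have hbd : b = d := by
      have : b ∈ ({c, d} : Finset (Fin n)) :=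
        h1 ▸ Finset.mem_insert_of_mem (Finset.mem_singleton_self b)
      rcases Finset.mem_insert.mp this with h | h
      · exact absurd h.symm (hne hcd.1 hab.2)
      · exact Finset.mem_singleton.mp h
    exact Prod.ext hac hbd
  have hsub : {G : EdgeIdx n → Bool | ∀ u ∈ S, ∀ v ∈ T, ¬ adj n G u v}
      ⊆ {G | ∀ e ∈ F, G e = false} := by
    intro G hG e he
    simp only [hF, Finset.mem_image, Finset.mem_product] at he
    obtain ⟨⟨u, v⟩, ⟨hu, hv⟩, rfl⟩ := he
    by_contra htrue
    rw [Bool.not_eq_false] at htrue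
    exact hG u hu v hv ⟨hne hu hv, f (u, v), htrue, hfval hu hv⟩
  calc erMeasure n p hp {G | ∀ u ∈ S, ∀ v ∈ T, ¬ adj n G u v}
      ≤ erMeasure n p hp {G | ∀ e ∈ F, G e = false} := measure_mono hsub
    _ = (1-p)^F.card := VSaux_prob_all_false n p hp F
    _ = (1-p)^(m*m) := by rw [hFcard]

theorem VSaux_prob_bad_le (n : ℕ) (p : ℝ≥0∞) (hp : p ≤ 1) (m : ℕ) (hm : 1 ≤ m) :
    erMeasure n p hp {G | ¬ ∀ S T : Finset (Fin n), Disjoint S T → S.card = m → T.card = m →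
        ∃ u ∈ S, ∃ v ∈ T, adj n G u v}
      ≤ (2^n * 2^n : ℕ) * (1-p)^(m*m) := by
  classical
  set B : Finset (Fin n) × Finset (Fin n) → Set (EdgeIdx n → Bool) := fun ST =>
    {G | Disjoint ST.1 ST.2 ∧ ST.1.card = m ∧ ST.2.card = m ∧
      ∀ u ∈ ST.1, ∀ v ∈ ST.2, ¬ adj n G u v} with hB
  have hsub : {G : EdgeIdx n → Bool | ¬ ∀ S T : Finset (Fin n), Disjoint S T → S.card = m →
      T.card = m → ∃ u ∈ S, ∃ v ∈ T, adj n G u v} ⊆ ⋃ ST, B ST := by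
    intro G hG
    push_neg at hG
    obtain ⟨S, T, hd, hS, hT, hno⟩ := hG
    refine Set.mem_iUnion.mpr ⟨(S, T), hd, hS, hT, ?_⟩
    intro u hu v hv hadj
    exact hno u hu v hv hadj
  have hBle : ∀ ST, erMeasure n p hp (B ST) ≤ (1-p)^(m*m) := by
    rintro ⟨S, T⟩
    by_cases hok : Disjoint S T ∧ S.card = m ∧ T.card = m
    · refine le_trans (measure_mono ?_) (VSaux_prob_no_adj_le n p hp m hm S T hok.1 hok.2.1 hok.2.2)
      intro G hG
      exact hG.2.2.2
    · have : B (S, T) = ∅ := by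
        ext G; simp only [hB, Set.mem_setOf_eq, Set.mem_empty_iff_false, iff_false]
        intro h; exact hok ⟨h.1, h.2.1, h.2.2.1⟩
      simp [this]
  calc erMeasure n p hp _ ≤ _ := measure_mono hsub
    _ ≤ ∑ ST : Finset (Fin n) × Finset (Fin n), erMeasure n p hp (B ST) :=
        measure_iUnion_fintype_le _ _
    _ ≤ (Fintype.card (Finset (Fin n) × Finset (Fin n))) • ((1-p)^(m*m)) := by
        rw [← Finset.card_univ]
        exact Finset.sum_le_card_nsmul _ _ _ (fun ST _ => hBle ST)
    _ = (2^n * 2^n : ℕ) * (1-p)^(m*m) := by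
        rw [nsmul_eq_mul]
        congr 1
        simp [Fintype.card_finset]

theorem VSaux_real_bound (ε₀ K ε' c : ℝ) (q : ℝ) (n m : ℕ) (hε₀ : 0 < ε₀)
    (hK : 0 < K) (hε' : 0 < ε') (hq0 : 0 ≤ q) (hq1 : q ≤ 1)
    (hn3 : (3:ℕ) ≤ n)
    (hqK : K * (n:ℝ) ^ (-c) ≤ q)
    (hb : (Real.log 4 + 1)/(K * ε'^2) ≤ ((n:ℝ))^(1-c))
    (hcn : (2/ε₀ : ℝ) ≤ (n:ℝ))
    (hm_low : ε' * n ≤ (m:ℕ)) :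
    ((2^n * 2^n : ℕ) : ℝ) * (1-q)^(m*m) ≤ ε₀/2 := by
  have hn0 : (0:ℝ) < n := by positivity
  have hexpq : (1-q)^(m*m) ≤ Real.exp (-(q * (m*m))) := by
    calc (1-q)^(m*m) ≤ (Real.exp (-q))^(m*m) := by
          apply pow_le_pow_left₀ (by linarith)
          nlinarith [Real.add_one_le_exp (-q)]
      _ = Real.exp (((m*m : ℕ) : ℝ) * (-q)) := by rw [← Real.exp_nat_mul]
      _ = Real.exp (-(q * (m*m))) := by push_cast; ring_nf
  have hmm : ε'^2 * (n:ℝ)^2 ≤ ((m:ℝ) * (m:ℝ)) := by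
    have h0 : (0:ℝ) ≤ ε' * n := by positivity
    calc ε'^2 * (n:ℝ)^2 = (ε' * n) * (ε' * n) := by ring
      _ ≤ (m:ℝ) * (m:ℝ) := mul_le_mul hm_low hm_low h0 (le_trans h0 hm_low)
  have hqm : (Real.log 4 + 1) * n ≤ q * ((m:ℕ) * (m:ℕ) : ℕ) := by
    have hKε' : 0 < K * ε'^2 := by positivity
    have hb' : Real.log 4 + 1 ≤ K * ε'^2 * (n:ℝ)^(1-c) := by
      rw [div_le_iff₀ hKε'] at hb; linarith [hb]
    have e1 : (n:ℝ)^(-c) * (n:ℝ)^2 = (n:ℝ)^(1-c) * n := by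
      rw [show ((n:ℝ)^2 : ℝ) = (n:ℝ)^((2:ℕ):ℝ) by rw [Real.rpow_natCast],
        ← Real.rpow_add hn0,
        show (-c + ((2:ℕ):ℝ)) = (1-c) + 1 by push_cast; ring,
        Real.rpow_add hn0, Real.rpow_one]
    have step : (K * (n:ℝ)^(-c)) * (ε'^2 * (n:ℝ)^2) ≤ q * ((m:ℝ)*(m:ℝ)) := by
      apply mul_le_mul hqK hmm (by positivity) hq0
    calc (Real.log 4 + 1) * n ≤ (K * ε'^2 * (n:ℝ)^(1-c)) * n := by
          apply mul_le_mul_of_nonneg_right hb' hn0.le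
      _ = (K * ε'^2) * ((n:ℝ)^(1-c) * n) := by ring
      _ = (K * (n:ℝ)^(-c)) * (ε'^2 * (n:ℝ)^2) := by rw [← e1]; ring
      _ ≤ q * ((m:ℝ)*(m:ℝ)) := step
      _ = q * ((m*m : ℕ) : ℝ) := by push_cast; ring
  calc ((2^n * 2^n : ℕ) : ℝ) * (1-q)^(m*m)
      ≤ ((2^n * 2^n : ℕ) : ℝ) * Real.exp (-(q * (m*m))) := by
        apply mul_le_mul_of_nonneg_left hexpq (by positivity)
    _ = Real.exp ((n:ℝ) * Real.log 4) * Real.exp (-(q * (m*m))) := by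
        congr 1
        rw [Real.exp_nat_mul, Real.exp_log (by norm_num : (0:ℝ) < 4)]
        push_cast
        rw [show (4:ℝ) = 2*2 by norm_num, mul_pow]
    _ ≤ Real.exp ((n:ℝ) * Real.log 4) * Real.exp (-((Real.log 4 + 1) * n)) := by
        apply mul_le_mul_of_nonneg_left _ (Real.exp_pos _).le
        apply Real.exp_le_exp.mpr
        push_cast at hqm ⊢
        linarith
    _ = Real.exp (-(n:ℝ)) := by rw [← Real.exp_add]; ring_nf
    _ ≤ ε₀/2 := by
        have h1 := Real.add_one_le_exp (n:ℝ)
        have h2 : 2 ≤ (n:ℝ) * ε₀ := by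
          rw [div_le_iff₀ hε₀] at hcn; linarith
        rw [Real.exp_neg]
        apply inv_le_of_inv_le₀ (by positivity)
        rw [← one_div, div_le_iff₀ (by positivity : (0:ℝ) < ε₀/2)]
        have : 1 ≤ ((n:ℝ)) * (ε₀/2) := by linarith
        nlinarith [h1, hε₀, this]

end Helpers

/-- Gap theorem for vertex separation: under `G(n, p_n)` with
`p_n = Ω(n^{-c})`, `0 ≤ c < 1`, w.h.p. `MAXVS(G_n) < (1 + δ) MINVS(G_n)`. -/

theorem stmt_14 (c : ℝ) (hc0 : 0 ≤ c) (hc : c < 1)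
    (p : ℕ → ℝ≥0∞) (hp1 : ∀ n, p n ≤ 1)
    (hΩ : ∃ K : ℝ, 0 < K ∧ ∀ᶠ n : ℕ in atTop, K * (n : ℝ) ^ (-c) ≤ (p n).toReal) :
    ∀ ε : ℝ, 0 < ε → ∀ δ : ℝ, 0 < δ → ∃ N : ℕ, ∀ n ≥ N,
      ENNReal.ofReal (1 - ε) <
        erMeasure n (p n) (hp1 n)
          {G | ((⨆ φ : Fin n ≃ Fin n, VS n G φ : ℕ) : ℝ)
            < (1 + δ) * ((⨅ φ : Fin n ≃ Fin n, VS n G φ : ℕ) : ℝ)} := by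
  intro ε hε δ hδ
  obtain ⟨K, hK, hΩev⟩ := hΩ
  set ε₀ := min ε (1/2) with hε₀def
  have hε₀pos : 0 < ε₀ := lt_min hε (by norm_num)
  have hε₀half : ε₀ ≤ 1/2 := min_le_right _ _
  have hε₀ε : ε₀ ≤ ε := min_le_left _ _
  have hδ1 : (0:ℝ) < 1 + δ := by linarith
  set ε' := δ / (8 * (1 + δ)) with hε'def
  have hε'pos : 0 < ε' := div_pos hδ (by linarith)
  have hε'le : ε' ≤ 1/8 := by
    rw [hε'def, div_le_iff₀ (by linarith : (0:ℝ) < 8 * (1 + δ))]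
    linarith
  have Hb : ∀ᶠ n : ℕ in atTop, (Real.log 4 + 1)/(K * ε'^2) ≤ ((n:ℝ))^(1-c) :=
    ((tendsto_rpow_atTop (by linarith : (0:ℝ) < 1 - c)).comp
      tendsto_natCast_atTop_atTop).eventually_ge_atTop _
  have Hc : ∀ᶠ n : ℕ in atTop, (2/ε₀ : ℝ) ≤ (n:ℝ) :=
    tendsto_natCast_atTop_atTop.eventually_ge_atTop _
  have Hd : ∀ᶠ n : ℕ in atTop, 3 ≤ n := eventually_ge_atTop 3
  obtain ⟨N, hN⟩ := eventually_atTop.mp (hΩev.and (Hb.and (Hc.and Hd)))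
  refine ⟨N, fun n hn => ?_⟩
  obtain ⟨hqK, hb, hcn, hn3⟩ := hN n hn
  set μ := erMeasure n (p n) (hp1 n) with hμ
  haveI : IsProbabilityMeasure μ := by rw [hμ]; unfold erMeasure; infer_instance
  set q := (p n).toReal with hq
  have hpfin : p n ≠ ⊤ := ne_top_of_le_ne_top ENNReal.one_ne_top (hp1 n)
  have hq0 : (0:ℝ) ≤ q := ENNReal.toReal_nonneg
  have hq1 : q ≤ 1 := by
    rw [hq, ← ENNReal.toReal_one]
    exact ENNReal.toReal_mono ENNReal.one_ne_top (hp1 n)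
  set m := ⌈ε' * n⌉₊ with hmdef
  have hn0R : (0:ℝ) < n := by
    have : 0 < n := by omega
    exact_mod_cast this
  have hn3R : (3:ℝ) ≤ n := by exact_mod_cast hn3
  have hm_low : ε' * n ≤ (m:ℝ) := Nat.le_ceil _
  have hm_up : (m:ℝ) ≤ ε' * n + 1 := (Nat.ceil_lt_add_one (by positivity)).le
  have hm1 : 1 ≤ m := Nat.ceil_pos.mpr (by positivity)
  have hmn : 2 * m ≤ n := by
    have h : ((2 * m : ℕ) : ℝ) ≤ (n:ℝ) := by
      push_cast
      nlinarith [hm_up, hε'le, hn0R, hn3R]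
    exact_mod_cast h
  set Egood : Set (EdgeIdx n → Bool) := {G | ∀ S T : Finset (Fin n), Disjoint S T →
    S.card = m → T.card = m → ∃ u ∈ S, ∃ v ∈ T, adj n G u v} with hEgood
  have hEsub : Egood ⊆ {G | ((⨆ φ : Fin n ≃ Fin n, VS n G φ : ℕ) : ℝ)
      < (1 + δ) * ((⨅ φ : Fin n ≃ Fin n, VS n G φ : ℕ) : ℝ)} := by
    intro G hG
    haveI : Nonempty (Fin n ≃ Fin n) := ⟨Equiv.refl _⟩
    have hsup : (⨆ φ : Fin n ≃ Fin n, VS n G φ) ≤ n - 1 :=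
      ciSup_le fun φ => VSaux_VS_le n G φ
    have hinf : n - 2*m + 1 ≤ ⨅ φ : Fin n ≃ Fin n, VS n G φ :=
      le_ciInf fun φ => VSaux_VS_lower n m hm1 hmn G hG φ
    have c1 : ((⨆ φ : Fin n ≃ Fin n, VS n G φ : ℕ) : ℝ) ≤ (n:ℝ) - 1 := by
      calc ((⨆ φ : Fin n ≃ Fin n, VS n G φ : ℕ) : ℝ) ≤ ((n - 1 : ℕ) : ℝ) :=
            Nat.cast_le.mpr hsup
        _ = (n:ℝ) - 1 := by
            rw [Nat.cast_sub (by omega : 1 ≤ n)]; norm_num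
    have c2 : ((n - 2*m + 1 : ℕ) : ℝ) = (n:ℝ) - 2*m + 1 := by
      rw [Nat.cast_add, Nat.cast_sub hmn]; push_cast; ring
    have c3 : (n:ℝ) - 1 < (1+δ) * ((n:ℝ) - 2*m + 1) := by
      have h2e : 2*ε'*(1+δ) = δ/4 := by
        rw [hε'def]; field_simp; ring
      nlinarith [hm_up, hδ, hn3R, h2e, hδ1,
        mul_le_mul_of_nonneg_left hm_up hδ1.le]
    show ((⨆ φ : Fin n ≃ Fin n, VS n G φ : ℕ) : ℝ)
        < (1 + δ) * ((⨅ φ : Fin n ≃ Fin n, VS n G φ : ℕ) : ℝ)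
    calc ((⨆ φ : Fin n ≃ Fin n, VS n G φ : ℕ) : ℝ) ≤ (n:ℝ) - 1 := c1
      _ < (1+δ) * ((n:ℝ) - 2*m + 1) := c3
      _ = (1+δ) * ((n - 2*m + 1 : ℕ) : ℝ) := by rw [c2]
      _ ≤ (1+δ) * ((⨅ φ : Fin n ≃ Fin n, VS n G φ : ℕ) : ℝ) := by
          apply mul_le_mul_of_nonneg_left _ hδ1.le
          exact_mod_cast hinf
  have hEc : μ {G | ¬ ∀ S T : Finset (Fin n), Disjoint S T → S.card = m → T.card = m →
      ∃ u ∈ S, ∃ v ∈ T, adj n G u v} ≤ ENNReal.ofReal (ε₀/2) := by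
    refine le_trans (VSaux_prob_bad_le n (p n) (hp1 n) m hm1) ?_
    have hrw : (1 - p n) = ENNReal.ofReal (1 - q) := by
      rw [ENNReal.ofReal_sub _ hq0, ENNReal.ofReal_one, hq, ENNReal.ofReal_toReal hpfin]
    calc ((2^n * 2^n : ℕ) : ℝ≥0∞) * (1 - p n)^(m*m)
        = ENNReal.ofReal (((2^n * 2^n : ℕ) : ℝ) * (1-q)^(m*m)) := by
          rw [ENNReal.ofReal_mul (by positivity), ENNReal.ofReal_pow (by linarith),
            ENNReal.ofReal_natCast, hrw]
      _ ≤ ENNReal.ofReal (ε₀/2) := by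
          apply ENNReal.ofReal_le_ofReal
          exact VSaux_real_bound ε₀ K ε' c q n m hε₀pos hK hε'pos hq0 hq1 hn3 hqK hb hcn hm_low
  have huniv : Egood ∪ {G | ¬ ∀ S T : Finset (Fin n), Disjoint S T → S.card = m →
      T.card = m → ∃ u ∈ S, ∃ v ∈ T, adj n G u v} = Set.univ := by
    ext G
    simp only [hEgood, Set.mem_union, Set.mem_setOf_eq, Set.mem_univ, iff_true]
    exact em _
  have h1le : (1:ℝ≥0∞) ≤ μ Egood + ENNReal.ofReal (ε₀/2) := by
    calc (1:ℝ≥0∞) = μ Set.univ := measure_univ.symm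
      _ = μ (Egood ∪ _) := by rw [huniv]
      _ ≤ μ Egood + μ {G | ¬ ∀ S T : Finset (Fin n), Disjoint S T → S.card = m →
          T.card = m → ∃ u ∈ S, ∃ v ∈ T, adj n G u v} := measure_union_le _ _
      _ ≤ μ Egood + ENNReal.ofReal (ε₀/2) := by gcongr
  have hμE : ENNReal.ofReal (1 - ε₀/2) ≤ μ Egood := by
    rw [ENNReal.ofReal_sub _ (by positivity), ENNReal.ofReal_one]
    exact tsub_le_iff_right.mpr h1le
  calc ENNReal.ofReal (1 - ε) ≤ ENNReal.ofReal (1 - ε₀) :=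
        ENNReal.ofReal_le_ofReal (by linarith)
    _ < ENNReal.ofReal (1 - ε₀/2) := by
        rw [ENNReal.ofReal_lt_ofReal_iff (by linarith)]
        linarith
    _ ≤ μ Egood := hμE
    _ ≤ _ := measure_mono hEsub
end

section
/- Under G(n, p_n) with p_n = Ω(n^{-c}), 0 ≤ c < 1: for all ε, δ > 0 there exists N such that for all n ≥ N, P[MINVB(G_n) ≥ (1-δ)·n/2] > 1-ε, where MINVB(G) is the minimum over layouts φ of the number of vertices u with φ(u) ≤ ⌊n/2⌋ having a neighbor v with φ(v) > ⌊n/2⌋. -/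
open MeasureTheory ProbabilityTheory Filter
open scoped ENNReal NNReal

def allAbsent (n : ℕ) (A : Finset (EdgeIdx n)) : Set (EdgeIdx n → Bool) :=
  {G | ∀ e ∈ A, G e = false}

lemma allAbsent_eq_pi {n : ℕ} (A : Finset (EdgeIdx n)) :
    allAbsent n A = Set.pi (A : Set (EdgeIdx n)) (fun _ => ({false} : Set Bool)) := by
  ext G; simp [allAbsent, Set.mem_pi]

lemma measurableSet_allAbsent {n : ℕ} (A : Finset (EdgeIdx n)) :
    MeasurableSet (allAbsent n A) := by
  rw [allAbsent_eq_pi]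
  exact MeasurableSet.pi (A : Set (EdgeIdx n)).to_countable fun e _ => measurableSet_singleton _

lemma erMeasure_allAbsent {n : ℕ} (p : ℝ≥0∞) (hp : p ≤ 1) (A : Finset (EdgeIdx n)) :
    erMeasure n p hp (allAbsent n A) = (1 - p) ^ A.card := by
  classical
  rw [allAbsent_eq_pi, erMeasure, ← Set.univ_pi_ite, Measure.pi_pi]
  have h1 : (PMF.bernoulli p.toNNReal (by simpa using ENNReal.toNNReal_mono ENNReal.one_ne_top hp)).toMeasure ({false} : Set Bool) = 1 - p := by
    rw [(PMF.bernoulli p.toNNReal (by simpa using ENNReal.toNNReal_mono ENNReal.one_ne_top hp)).toMeasure_apply_singleton false (measurableSet_singleton _)]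
    exact (PMF.bernoulli_apply _ _).trans (by simp [ENNReal.coe_toNNReal (ne_top_of_le_ne_top ENNReal.one_ne_top hp)])
  have h2 : ∀ e : EdgeIdx n,
      (PMF.bernoulli p.toNNReal (by simpa using ENNReal.toNNReal_mono ENNReal.one_ne_top hp)).toMeasure (if e ∈ (A : Set (EdgeIdx n)) then ({false} : Set Bool) else Set.univ)
        = (if e ∈ A then (1 - p) else 1) := by
    intro e
    by_cases he : e ∈ A <;> simp only [Finset.mem_coe, he, h1, if_true, if_false, ite_true, ite_false, measure_univ, not_false_eq_true]
  simp only [h2]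
  rw [Finset.prod_ite_mem, Finset.univ_inter, Finset.prod_const]

noncomputable def crossEdges (n : ℕ) (T S : Finset (Fin n)) : Finset (EdgeIdx n) :=
  @Finset.filter _ (fun e => ∃ u ∈ T, ∃ v, v ∉ S ∧ e.1 = {u, v})
    (Classical.decPred _) Finset.univ

lemma card_crossEdges {n : ℕ} {T S : Finset (Fin n)} (hTS : T ⊆ S) :
    T.card * Sᶜ.card ≤ (crossEdges n T S).card := by
  classical
  rw [← Finset.card_product, ← Finset.card_attach (s := T ×ˢ Sᶜ)]
  have hne : ∀ x : {x // x ∈ T ×ˢ Sᶜ}, x.1.1 ≠ x.1.2 := by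
    rintro ⟨⟨u, v⟩, hx⟩
    simp only [Finset.mem_product, Finset.mem_compl] at hx
    intro h
    obtain rfl : u = v := h
    exact hx.2 (hTS hx.1)
  refine Finset.card_le_card_of_injOn
    (fun x => (⟨{x.1.1, x.1.2}, Finset.card_pair (hne x)⟩ : EdgeIdx n)) ?_ ?_
  · rintro ⟨⟨u, v⟩, hx⟩ -
    simp only [Finset.mem_product, Finset.mem_compl] at hx
    exact (@Finset.mem_filter _ _ (Classical.decPred _) _ _).2 ⟨Finset.mem_univ _, u, hx.1, v, hx.2, rfl⟩
  · rintro ⟨⟨u₁, v₁⟩, hx⟩ - ⟨⟨u₂, v₂⟩, hy⟩ - hf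
    simp only [Finset.mem_product, Finset.mem_compl] at hx hy
    have hsets : ({u₁, v₁} : Finset (Fin n)) = {u₂, v₂} := congrArg Subtype.val hf
    have hu : u₁ = u₂ := by
      have : u₁ ∈ ({u₂, v₂} : Finset (Fin n)) := hsets ▸ by simp
      rcases Finset.mem_insert.1 this with h | h
      · exact h
      · exact absurd (Finset.mem_singleton.1 h ▸ hTS hx.1) hy.2
    have hv : v₁ = v₂ := by
      have : v₁ ∈ ({u₂, v₂} : Finset (Fin n)) := hsets ▸ by simp
      rcases Finset.mem_insert.1 this with h | h
      · exact absurd (h ▸ hTS hy.1) hx.2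
      · exact Finset.mem_singleton.1 h
    exact Subtype.ext (Prod.ext hu hv)

noncomputable def badIdx (n k : ℕ) : Finset (Finset (Fin n) × Finset (Fin n)) :=
  @Finset.filter _ (fun ST => ST.2 ⊆ ST.1 ∧ ST.2.card = k ∧ ST.1.card = n / 2)
    (Classical.decPred _) (Finset.univ.powerset ×ˢ Finset.univ.powerset)

def badSet (n k : ℕ) : Set (EdgeIdx n → Bool) :=
  ⋃ ST ∈ badIdx n k, allAbsent n (crossEdges n ST.2 ST.1)

lemma measurableSet_badSet (n k : ℕ) : MeasurableSet (badSet n k) :=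
  (badIdx n k).measurableSet_biUnion fun ST _ => measurableSet_allAbsent _

lemma erMeasure_badSet_le {n : ℕ} (k : ℕ) (p : ℝ≥0∞) (hp : p ≤ 1) :
    erMeasure n p hp (badSet n k)
      ≤ ((2 ^ n * 2 ^ n : ℕ) : ℝ≥0∞) * (1 - p) ^ (k * (n - n / 2)) := by
  classical
  refine le_trans (measure_biUnion_finset_le _ _) ?_
  have hterm : ∀ ST ∈ badIdx n k,
      erMeasure n p hp (allAbsent n (crossEdges n ST.2 ST.1))
        ≤ (1 - p) ^ (k * (n - n / 2)) := by
    intro ST hST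
    simp only [badIdx, Finset.mem_filter] at hST
    obtain ⟨-, hsub, hT, hS⟩ := hST
    rw [erMeasure_allAbsent]
    refine pow_le_pow_right_of_le_one' tsub_le_self ?_
    calc k * (n - n / 2) = ST.2.card * ST.1ᶜ.card := by
          rw [hT, Finset.card_compl, Fintype.card_fin, hS]
      _ ≤ _ := card_crossEdges hsub
  refine le_trans (Finset.sum_le_card_nsmul _ _ _ hterm) ?_
  rw [nsmul_eq_mul]
  refine mul_le_mul_left ?_ _
  refine Nat.cast_le.2 ?_
  unfold badIdx
  refine le_trans (@Finset.card_filter_le _ _ _ (Classical.decPred _)) ?_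
  simp [Finset.card_powerset]

lemma card_filter_lt_fin {n m : ℕ} (hm : m < n) :
    (Finset.univ.filter fun i : Fin n => (i : ℕ) < m).card = m := by
  have h : (Finset.univ.filter fun i : Fin n => (i : ℕ) < m) = Finset.Iio (⟨m, hm⟩ : Fin n) := by
    ext i
    simp [Fin.lt_def]
  rw [h, Fin.card_Iio]

lemma card_Lset {n : ℕ} (φ : Fin n ≃ Fin n) {m : ℕ} (hm : m < n) :
    (Lset n φ m).card = m := by
  classical
  have himg : (Lset n φ m).image φ = Finset.univ.filter fun i : Fin n => (i : ℕ) < m := by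
    ext i
    simp only [Lset, Finset.mem_image, Finset.mem_filter, Finset.mem_univ, true_and]
    constructor
    · rintro ⟨u, hu, rfl⟩; exact hu
    · intro h; exact ⟨φ.symm i, by simpa using h, by simp⟩
  rw [← Finset.card_image_of_injective _ φ.injective, himg, card_filter_lt_fin hm]

lemma vsep_lower {n k : ℕ} (hn : 1 ≤ n) (G : EdgeIdx n → Bool)
    (hG : G ∉ badSet n k) (φ : Fin n ≃ Fin n) :
    n / 2 < vsep n G φ (n / 2) + k := by
  classical
  set S := Lset n φ (n / 2) with hSdef
  set P : Fin n → Prop := fun u => ∃ v, n / 2 ≤ (φ v : ℕ) ∧ adj n G u v with hPdef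
  have hvs : vsep n G φ (n / 2) = (S.filter P).card := by
    rw [vsep]
    congr 1
    rw [hSdef, Lset, Finset.filter_filter]
    apply Finset.filter_congr_decidable
  have hsplit : (S.filter P).card + (S.filter fun u => ¬ P u).card = S.card :=
    Finset.card_filter_add_card_filter_not _
  have hScard : S.card = n / 2 := card_Lset φ (Nat.div_lt_self hn one_lt_two)
  have hW : (S.filter fun u => ¬ P u).card < k := by
    by_contra hle
    push_neg at hle
    obtain ⟨T, hTW, hTcard⟩ := Finset.exists_subset_card_eq hle
    apply hG
    have hTS : T ⊆ S := hTW.trans (Finset.filter_subset _ _)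
    have hmem : (S, T) ∈ badIdx n k := by
      simp only [badIdx, Finset.mem_filter, Finset.mem_product, Finset.mem_powerset]
      exact ⟨⟨Finset.subset_univ _, Finset.subset_univ _⟩, hTS, hTcard, hScard⟩
    have habs : G ∈ allAbsent n (crossEdges n T S) := by
      intro e he
      simp only [crossEdges, Finset.mem_filter, Finset.mem_univ, true_and] at he
      obtain ⟨u, hu, v, hv, he1⟩ := he
      by_contra hGe
      have hGe' : G e = true := by simpa using hGe
      have huS : u ∈ S := hTS hu
      have huv : u ≠ v := fun h => hv (h ▸ huS)
      have hvpos : n / 2 ≤ (φ v : ℕ) := by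
        by_contra hlt
        exact hv (by simp [hSdef, Lset, Nat.lt_of_not_le hlt])
      have hPu : P u := ⟨v, hvpos, huv, e, hGe', he1⟩
      have := (Finset.mem_filter.1 (hTW hu)).2
      exact this hPu
    exact Set.mem_iUnion.2 ⟨(S, T), Set.mem_iUnion.2 ⟨hmem, habs⟩⟩
  omega

/-- High-probability lower bound for minimum vertex bisection: under
`G(n, p_n)` with `p_n = Ω(n^{-c})`, `0 ≤ c < 1`, w.h.p.
`MINVB(G_n) ≥ (1 - δ) n / 2`. -/
theorem stmt_15 (c : ℝ) (hc0 : 0 ≤ c) (hc : c < 1)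
    (p : ℕ → ℝ≥0∞) (hp1 : ∀ n, p n ≤ 1)
    (hΩ : ∃ K : ℝ, 0 < K ∧ ∀ᶠ n : ℕ in atTop, K * (n : ℝ) ^ (-c) ≤ (p n).toReal) :
    ∀ ε : ℝ, 0 < ε → ∀ δ : ℝ, 0 < δ → ∃ N : ℕ, ∀ n ≥ N,
      ENNReal.ofReal (1 - ε) <
        erMeasure n (p n) (hp1 n)
          {G | (1 - δ) * (n : ℝ) / 2
            ≤ ((⨅ φ : Fin n ≃ Fin n, vsep n G φ (n / 2) : ℕ) : ℝ)} := by
  classical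
  obtain ⟨K, hK, hKev⟩ := hΩ
  intro ε hε δ hδ
  set ε' := min ε (1/2) with hε'def
  have hε'pos : 0 < ε' := lt_min hε (by norm_num)
  have hε'le : ε' ≤ 1/2 := min_le_right _ _
  have hε'ε : ε' ≤ ε := min_le_left _ _
  set M := Real.log 4 + max (Real.log (2 / ε')) 0 with hMdef
  have h1 : Tendsto (fun n : ℕ => (K * δ / 8) * (n : ℝ) ^ (1 - c)) atTop atTop := by
    apply Tendsto.const_mul_atTop (by positivity)
    exact (tendsto_rpow_atTop (by linarith)).comp tendsto_natCast_atTop_atTop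
  have h2 : Tendsto (fun n : ℕ => δ * (n : ℝ)) atTop atTop :=
    Tendsto.const_mul_atTop hδ tendsto_natCast_atTop_atTop
  have hev : ∀ᶠ n : ℕ in atTop,
      (K * (n : ℝ) ^ (-c) ≤ (p n).toReal ∧ M ≤ (K * δ / 8) * (n : ℝ) ^ (1 - c)) ∧
      (2 ≤ δ * (n : ℝ) ∧ 1 ≤ n) :=
    (hKev.and (h1.eventually_ge_atTop M)).and
      ((h2.eventually_ge_atTop 2).and (eventually_ge_atTop 1))
  obtain ⟨N, hN⟩ := eventually_atTop.1 hev
  refine ⟨N, fun n hn => ?_⟩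
  obtain ⟨⟨hpn, hMn⟩, hδn, hn1⟩ := hN n hn
  set k := ⌈δ * (n : ℝ) / 4⌉₊ with hk
  set pt := (p n).toReal with hpt
  have hnpos : (0 : ℝ) < n := by exact_mod_cast hn1
  have hptnn : 0 ≤ pt := ENNReal.toReal_nonneg
  have hpt1 : pt ≤ 1 := by
    rw [hpt, ← ENNReal.toReal_one]
    exact ENNReal.toReal_mono ENNReal.one_ne_top (hp1 n)
  have hpn_ne_top : p n ≠ ∞ := ((hp1 n).trans_lt ENNReal.one_lt_top).ne
  haveI : IsProbabilityMeasure (erMeasure n (p n) (hp1 n)) := by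
    unfold erMeasure; infer_instance
  -- key exponent inequality
  have hkm : (n : ℝ) * Real.log 4 + Real.log (2 / ε')
      ≤ pt * ((k * (n - n / 2) : ℕ) : ℝ) := by
    have hcast : ((k * (n - n / 2) : ℕ) : ℝ) = (k : ℝ) * ((n - n / 2 : ℕ) : ℝ) := by
      push_cast; ring
    have hm2 : (n : ℝ) ≤ 2 * ((n - n / 2 : ℕ) : ℝ) := by
      exact_mod_cast (by omega : n ≤ 2 * (n - n / 2))
    have hkge : δ * n / 4 ≤ (k : ℝ) := Nat.le_ceil _
    have hd4 : (0 : ℝ) ≤ δ * n / 4 := by positivity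
    have hkmge : (δ * n / 4) * ((n : ℝ) / 2) ≤ ((k * (n - n / 2) : ℕ) : ℝ) := by
      rw [hcast]
      exact mul_le_mul hkge (by linarith) (by linarith) (le_trans hd4 hkge)
    have hrw : K * (n : ℝ) ^ (-c) * ((δ * n / 4) * ((n : ℝ) / 2))
        = ((K * δ / 8) * (n : ℝ) ^ (1 - c)) * n := by
      rw [show (1 : ℝ) - c = -c + 1 by ring, Real.rpow_add hnpos, Real.rpow_one]
      ring
    have hn1' : (1 : ℝ) ≤ n := by exact_mod_cast hn1
    have hlogb : Real.log (2 / ε') ≤ (n : ℝ) * max (Real.log (2 / ε')) 0 := by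
      calc Real.log (2 / ε') ≤ max (Real.log (2 / ε')) 0 := le_max_left _ _
        _ = 1 * max (Real.log (2 / ε')) 0 := (one_mul _).symm
        _ ≤ (n : ℝ) * max (Real.log (2 / ε')) 0 :=
            mul_le_mul_of_nonneg_right hn1' (le_max_right _ _)
    calc (n : ℝ) * Real.log 4 + Real.log (2 / ε')
        ≤ (n : ℝ) * Real.log 4 + (n : ℝ) * max (Real.log (2 / ε')) 0 := by linarith
      _ = M * n := by rw [hMdef]; ring
      _ ≤ ((K * δ / 8) * (n : ℝ) ^ (1 - c)) * n :=
          mul_le_mul_of_nonneg_right hMn (le_of_lt hnpos)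
      _ = K * (n : ℝ) ^ (-c) * ((δ * n / 4) * ((n : ℝ) / 2)) := hrw.symm
      _ ≤ pt * ((k * (n - n / 2) : ℕ) : ℝ) :=
          mul_le_mul hpn hkmge (by positivity) hptnn
  -- measure of bad set
  have hμbad : erMeasure n (p n) (hp1 n) (badSet n k) ≤ ENNReal.ofReal (ε' / 2) := by
    refine le_trans (erMeasure_badSet_le k (p n) (hp1 n)) ?_
    have h1p : (1 : ℝ≥0∞) - p n = ENNReal.ofReal (1 - pt) := by
      rw [ENNReal.ofReal_sub _ hptnn, ENNReal.ofReal_one, hpt,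
        ENNReal.ofReal_toReal hpn_ne_top]
    rw [h1p, ← ENNReal.ofReal_pow (by linarith) (k * (n - n / 2)),
      ← ENNReal.ofReal_natCast, ← ENNReal.ofReal_mul (by positivity)]
    apply ENNReal.ofReal_le_ofReal
    have hexp4 : Real.exp ((n : ℝ) * Real.log 4) = 4 ^ n := by
      rw [Real.exp_nat_mul, Real.exp_log (by norm_num)]
    calc ((2 ^ n * 2 ^ n : ℕ) : ℝ) * (1 - pt) ^ (k * (n - n / 2))
        ≤ (4 : ℝ) ^ n * Real.exp (-pt) ^ (k * (n - n / 2)) := by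
          apply mul_le_mul ?_ (pow_le_pow_left₀ (by linarith)
            (by linarith [Real.add_one_le_exp (-pt)]) _) (pow_nonneg (by linarith) _)
            (by positivity)
          push_cast
          rw [← mul_pow]; norm_num
      _ = (4 : ℝ) ^ n * Real.exp (-(pt * ((k * (n - n / 2) : ℕ) : ℝ))) := by
          rw [← Real.exp_nat_mul]
          congr 1
          ring
      _ ≤ (4 : ℝ) ^ n * Real.exp (-((n : ℝ) * Real.log 4 + Real.log (2 / ε'))) := by
          apply mul_le_mul_of_nonneg_left _ (by positivity)
          exact Real.exp_le_exp.2 (by linarith)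
      _ = ε' / 2 := by
          rw [neg_add, Real.exp_add, Real.exp_neg, Real.exp_neg, hexp4,
            Real.exp_log (by positivity), inv_div, ← mul_assoc,
            mul_inv_cancel₀ (by positivity), one_mul]
  -- inclusion
  have hsub : (badSet n k)ᶜ ⊆ {G : EdgeIdx n → Bool | (1 - δ) * (n : ℝ) / 2
      ≤ ((⨅ φ : Fin n ≃ Fin n, vsep n G φ (n / 2) : ℕ) : ℝ)} := by
    intro G hG
    simp only [Set.mem_setOf_eq]
    have hne : (Set.range fun φ : Fin n ≃ Fin n => vsep n G φ (n / 2)).Nonempty :=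
      ⟨_, ⟨Equiv.refl _, rfl⟩⟩
    obtain ⟨φ₀, hφ₀⟩ := Nat.sInf_mem hne
    have hiInf : (⨅ φ : Fin n ≃ Fin n, vsep n G φ (n / 2)) = vsep n G φ₀ (n / 2) :=
      hφ₀.symm
    rw [hiInf]
    have h1' := vsep_lower hn1 G hG φ₀
    have hc1 : ((n / 2 : ℕ) : ℝ) + 1 ≤ (vsep n G φ₀ (n / 2) : ℝ) + k := by
      exact_mod_cast h1'
    have hc2 : (n : ℝ) ≤ 2 * ((n / 2 : ℕ) : ℝ) + 1 := by
      exact_mod_cast (by omega : n ≤ 2 * (n / 2) + 1)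
    have hc3 : (k : ℝ) < δ * n / 4 + 1 := Nat.ceil_lt_add_one (by positivity)
    linarith
  -- conclusion
  calc ENNReal.ofReal (1 - ε) < ENNReal.ofReal (1 - ε' / 2) := by
        rw [ENNReal.ofReal_lt_ofReal_iff (by linarith)]
        linarith
    _ = 1 - ENNReal.ofReal (ε' / 2) := by
        rw [ENNReal.ofReal_sub _ (by positivity), ENNReal.ofReal_one]
    _ ≤ 1 - erMeasure n (p n) (hp1 n) (badSet n k) := tsub_le_tsub_left hμbad 1
    _ = erMeasure n (p n) (hp1 n) (badSet n k)ᶜ :=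
        (prob_compl_eq_one_sub (measurableSet_badSet n k)).symm
    _ ≤ _ := measure_mono hsub
end
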